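/- arXiv:1007.2484 — 3 statements merged into one kernel-verified Lean document; each statement's English description precedes it below -/
import Mathlib

section
/- Let H = (V,E) be a finite graph, k a positive integer, and α : V → ℕ. There exists a k-fractional orientation of H in which every vertex v has outdegree α(v) if and only if (a) Σ_{v∈V} α(v) = k·|E|, and (b) for every connected subset S ⊆ V, Σ_{v∈S} α(v) ≥ k·|E_S|, where E_S is the set of edges with both endpoints in S. -/
open scoped Classical

noncomputable section

/-- A finite loopless multigraph: edges are abstract objects with an unordered pair of
distinct endpoints. -/
structure Multigraph where
  V : Type
  E : Type
  [finV : Fintype V]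
  [finE : Fintype E]
  [decV : DecidableEq V]
  [decE : DecidableEq E]
  ends : E → Sym2 V
  loopless : ∀ e, ¬ (ends e).IsDiag

attribute [instance] Multigraph.finV Multigraph.finE Multigraph.decV Multigraph.decE

namespace Multigraph

variable (H : Multigraph)

/-- A `k`-fractional orientation: `ω v e` is the value of the arc of `e` with origin `v`;
the two arc values of each edge sum to `k`, and non-incident pairs get value `0`. -/
def IsKOrient (k : ℕ) (ω : H.V → H.E → ℕ) : Prop :=
  (∀ e u v, H.ends e = s(u, v) → ω u e + ω v e = k) ∧
  (∀ u e, u ∉ H.ends e → ω u e = 0)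

/-- The outdegree of a vertex in a fractional orientation. -/
def outdeg (ω : H.V → H.E → ℕ) (v : H.V) : ℕ := ∑ e : H.E, ω v e

/-- `S` is a (nonempty) connected subset of vertices: any two vertices of `S` are linked by a
path using edges with both ends in `S`. -/
def ConnSub (S : Finset H.V) : Prop :=
  S.Nonempty ∧ ∀ u ∈ S, ∀ v ∈ S,
    Relation.ReflTransGen (fun a b => a ∈ S ∧ b ∈ S ∧ ∃ e, H.ends e = s(a, b)) u v

/-- The set `E_S` of edges with both endpoints in `S`. -/
def edgesIn (S : Finset H.V) : Finset H.E :=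
  Finset.univ.filter (fun e => ∀ v ∈ H.ends e, v ∈ S)

end Multigraph

lemma List.getLast?_append_cons' {α : Type} (l1 l2 : List α) (a : α) :
    (l1 ++ a :: l2).getLast? = (a :: l2).getLast? := by
  induction l1 with
  | nil => rfl
  | cons b l ih =>
    cases l with
    | nil => simp [List.getLast?_cons_cons]
    | cons c l' =>
      rw [List.cons_append, List.cons_append, List.getLast?_cons_cons, ← List.cons_append]
      exact ih

namespace Multigraph

variable {H : Multigraph} {k : ℕ}

lemma exists_ends (e : H.E) : ∃ a b, H.ends e = s(a, b) ∧ a ≠ b := by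
  obtain ⟨a, b, h⟩ : ∃ a b, H.ends e = s(a, b) := (H.ends e).ind (fun a b => ⟨a, b, rfl⟩)
  refine ⟨a, b, h, fun hab => H.loopless e ?_⟩
  rw [h, Sym2.mk_isDiag_iff]; exact hab

lemma sum_arc {ω : H.V → H.E → ℕ} (hω : H.IsKOrient k ω) (e : H.E) :
    ∑ v : H.V, ω v e = k := by
  obtain ⟨a, b, he, hab⟩ := exists_ends e
  have h0 : ∀ v ∈ Finset.univ, v ∉ ({a, b} : Finset H.V) → ω v e = 0 := by
    intro v _ hv
    apply hω.2
    rw [he, Sym2.mem_iff]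
    simpa using hv
  rw [← Finset.sum_subset (Finset.subset_univ {a, b}) h0, Finset.sum_pair hab]
  exact hω.1 e a b he

lemma sum_outdeg {ω : H.V → H.E → ℕ} (hω : H.IsKOrient k ω) :
    ∑ v : H.V, H.outdeg ω v = k * Fintype.card H.E := by
  unfold outdeg
  rw [Finset.sum_comm]
  simp [sum_arc hω, mul_comm, Finset.card_univ]

lemma sum_arc_in {ω : H.V → H.E → ℕ} (hω : H.IsKOrient k ω) {S : Finset H.V}
    {e : H.E} (he : e ∈ H.edgesIn S) : ∑ v ∈ S, ω v e = k := by
  have hmem : ∀ v ∈ H.ends e, v ∈ S := by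
    simpa [edgesIn] using he
  have h0 : ∀ v ∈ Finset.univ, v ∉ S → ω v e = 0 := fun v _ hv =>
    hω.2 v e (fun hc => hv (hmem v hc))
  rw [Finset.sum_subset (Finset.subset_univ S) h0]
  exact sum_arc hω e

lemma sum_outdeg_subset {ω : H.V → H.E → ℕ} (hω : H.IsKOrient k ω) (S : Finset H.V) :
    k * (H.edgesIn S).card ≤ ∑ v ∈ S, H.outdeg ω v := by
  have h1 : ∑ v ∈ S, H.outdeg ω v = ∑ e : H.E, ∑ v ∈ S, ω v e := Finset.sum_comm
  have h2 : ∑ e ∈ H.edgesIn S, ∑ v ∈ S, ω v e = k * (H.edgesIn S).card := by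
    rw [Finset.sum_congr rfl (fun e he => sum_arc_in hω he)]
    simp [mul_comm]
  rw [h1, ← h2]
  exact Finset.sum_le_sum_of_subset (Finset.subset_univ _)

/-- The push operation along one positive arc. -/
def push (ω : H.V → H.E → ℕ) (e : H.E) (a b : H.V) : H.V → H.E → ℕ :=
  fun x f => if f = e then (if x = a then ω a e - 1 else if x = b then ω b e + 1 else ω x f)
    else ω x f

section push

variable {ω : H.V → H.E → ℕ} {e : H.E} {a b : H.V}

lemma push_self_a : push ω e a b a e = ω a e - 1 := by
  unfold push; rw [if_pos rfl, if_pos rfl]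

lemma push_self_b (hba : b ≠ a) : push ω e a b b e = ω b e + 1 := by
  unfold push; rw [if_pos rfl, if_neg hba, if_pos rfl]

lemma push_self_other {x : H.V} (hxa : x ≠ a) (hxb : x ≠ b) :
    push ω e a b x e = ω x e := by
  unfold push; rw [if_pos rfl, if_neg hxa, if_neg hxb]

lemma push_ne {f : H.E} (hf : f ≠ e) (x : H.V) : push ω e a b x f = ω x f := by
  unfold push; rw [if_neg hf]

lemma push_isKOrient (hω : H.IsKOrient k ω) (he : H.ends e = s(a, b)) (hab : a ≠ b)
    (hpos : 0 < ω a e) : H.IsKOrient k (push ω e a b) := by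
  have hsum := hω.1 e a b he
  constructor
  · intro f u v hf
    by_cases hfe : f = e
    · rw [hfe] at hf ⊢
      rw [he] at hf
      rcases Sym2.eq_iff.mp hf with ⟨h1, h2⟩ | ⟨h1, h2⟩
      · subst h1; subst h2
        rw [push_self_a, push_self_b hab.symm]; omega
      · subst h1; subst h2
        rw [push_self_b hab.symm, push_self_a]; omega
    · rw [push_ne hfe, push_ne hfe]
      exact hω.1 f u v hf
  · intro u f hf
    by_cases hfe : f = e
    · rw [hfe] at hf ⊢
      have h0 : ω u e = 0 := hω.2 u e hf
      have hf' : u ≠ a ∧ u ≠ b := by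
        rw [he, Sym2.mem_iff] at hf; push_neg at hf; exact hf
      rw [push_self_other hf'.1 hf'.2, h0]
    · rw [push_ne hfe]
      exact hω.2 u f hf

lemma outdeg_split (ω : H.V → H.E → ℕ) (x : H.V) (e : H.E) :
    H.outdeg ω x = (∑ f ∈ Finset.univ.erase e, ω x f) + ω x e :=
  (Finset.sum_erase_add _ _ (Finset.mem_univ e)).symm

lemma push_erase_sum (x : H.V) :
    ∑ f ∈ Finset.univ.erase e, push ω e a b x f = ∑ f ∈ Finset.univ.erase e, ω x f := by
  refine Finset.sum_congr rfl (fun f hf => ?_)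
  exact push_ne (Finset.mem_erase.mp hf).1 x

lemma push_outdeg_a (hpos : 0 < ω a e) :
    H.outdeg (push ω e a b) a + 1 = H.outdeg ω a := by
  rw [outdeg_split (push ω e a b) a e, outdeg_split ω a e, push_erase_sum, push_self_a]
  omega

lemma push_outdeg_b (hba : b ≠ a) :
    H.outdeg (push ω e a b) b = H.outdeg ω b + 1 := by
  rw [outdeg_split (push ω e a b) b e, outdeg_split ω b e, push_erase_sum, push_self_b hba]
  omega

lemma push_outdeg_other {x : H.V} (hxa : x ≠ a) (hxb : x ≠ b) :
    H.outdeg (push ω e a b) x = H.outdeg ω x := by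
  rw [outdeg_split (push ω e a b) x e, outdeg_split ω x e, push_erase_sum,
    push_self_other hxa hxb]

lemma push_le {x : H.V} (hxa : x ≠ a) (f : H.E) : ω x f ≤ push ω e a b x f := by
  by_cases hf : f = e
  · subst hf
    by_cases hxb : x = b
    · subst hxb
      rw [push_self_b hxa]; omega
    · rw [push_self_other hxa hxb]
  · rw [push_ne hf]

end push

/-- Total deviation of the outdegrees from the target `α`. -/
def Phi (α : H.V → ℕ) (ω : H.V → H.E → ℕ) : ℕ :=
  ∑ v : H.V, ((H.outdeg ω v - α v) + (α v - H.outdeg ω v))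

lemma sum_two_point {g g' : H.V → ℕ} {a w : H.V} (haw : a ≠ w)
    (h : ∀ x, x ≠ a → x ≠ w → g x = g' x) :
    (∑ x : H.V, g x) + (g' a + g' w) = (∑ x : H.V, g' x) + (g a + g w) := by
  have ha := Finset.mem_univ a
  have hw : w ∈ Finset.univ.erase a := Finset.mem_erase.mpr ⟨haw.symm, Finset.mem_univ w⟩
  have e1 : ∑ x : H.V, g x =
      (∑ x ∈ (Finset.univ.erase a).erase w, g x) + g w + g a := by
    rw [Finset.sum_erase_add _ _ hw, Finset.sum_erase_add _ _ ha]
  have e2 : ∑ x : H.V, g' x =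
      (∑ x ∈ (Finset.univ.erase a).erase w, g' x) + g' w + g' a := by
    rw [Finset.sum_erase_add _ _ hw, Finset.sum_erase_add _ _ ha]
  have e3 : ∑ x ∈ (Finset.univ.erase a).erase w, g x =
      ∑ x ∈ (Finset.univ.erase a).erase w, g' x := by
    refine Finset.sum_congr rfl (fun x hx => ?_)
    rcases Finset.mem_erase.mp hx with ⟨hxw, hx'⟩
    exact h x (Finset.mem_erase.mp hx').1 hxw
  omega

lemma chain_mono {r r' : H.V → H.V → Prop} :
    ∀ (l : List H.V) (a : H.V), List.Chain r a l →
      (∀ x ∈ a :: l, ∀ y, r x y → r' x y) → List.Chain r' a l := by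
  intro l
  induction l with
  | nil => intro a _ _; exact List.Chain.nil
  | cons w rest ih =>
    intro a hch himp
    rw [List.Chain, List.chain_cons] at hch ⊢
    refine ⟨himp a (by simp) w hch.1, ih w hch.2 (fun x hx y hr => himp x (by simp [hx]) y hr)⟩

/-- The positive-arc relation of a fractional orientation. -/
def Arc (ω : H.V → H.E → ℕ) (x y : H.V) : Prop := ∃ e, H.ends e = s(x, y) ∧ 0 < ω x e

/-- Key lemma: pushing one unit along a positive path from a vertex with excess outdegree to a
vertex with deficient outdegree strictly decreases the total deviation. -/
lemma pushPath (α : H.V → ℕ) (u : H.V) :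
    ∀ n (ω : H.V → H.E → ℕ), H.IsKOrient k ω →
      ∀ (a : H.V) (l : List H.V), l.length ≤ n →
        List.Chain (Arc ω) a l →
        (a :: l).getLast? = some u →
        α a < H.outdeg ω a → H.outdeg ω u < α u →
        ∃ ω', H.IsKOrient k ω' ∧ Phi α ω' < Phi α ω := by
  intro n
  induction n with
  | zero =>
    intro ω hω a l hlen hch hlast ha hu
    cases l with
    | nil =>
      simp only [List.getLast?_singleton, Option.some.injEq] at hlast
      subst hlast; omega
    | cons w rest => simp at hlen
  | succ n ih =>
    intro ω hω a l hlen hch hlast ha hu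
    match l, hch, hlast, hlen with
    | [], _, hlast, _ =>
      simp only [List.getLast?_singleton, Option.some.injEq] at hlast
      subst hlast; omega
    | w :: rest, hch, hlast, hlen =>
      rw [List.Chain, List.chain_cons] at hch
      obtain ⟨haw, hch⟩ := hch
      by_cases hmem : a ∈ w :: rest
      · -- shortcut the cycle
        obtain ⟨l1, l2, hsplit⟩ := List.append_of_mem hmem
        have hch2 : List.Chain (Arc ω) a l2 := by
          have hc : List.Chain (Arc ω) a (l1 ++ a :: l2) := by
            rw [← hsplit, List.Chain, List.chain_cons]; exact ⟨haw, hch⟩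
          exact (List.isChain_cons_split.mp hc).2
        have hlast2 : (a :: l2).getLast? = some u := by
          rw [← List.getLast?_append_cons' (a :: l1) l2 a]
          have : (a :: l1) ++ a :: l2 = a :: w :: rest := by rw [hsplit]; simp
          rw [this]; exact hlast
        have hlen2 : l2.length ≤ n := by
          have hl : (w :: rest).length = l1.length + l2.length + 1 := by
            rw [hsplit]; simp only [List.length_append, List.length_cons]; omega
          simp only [List.length_cons] at hlen hl
          omega
        exact ih ω hω a l2 hlen2 hch2 hlast2 ha hu
      · obtain ⟨e, he, hpos⟩ := haw
        have haw' : a ≠ w := fun h => hmem (h ▸ List.mem_cons_self)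
        set ω1 := push ω e a w with hω1def
        have hω1 : H.IsKOrient k ω1 := push_isKOrient hω he haw' hpos
        have hda : H.outdeg ω1 a + 1 = H.outdeg ω a := push_outdeg_a hpos
        have hdw : H.outdeg ω1 w = H.outdeg ω w + 1 := push_outdeg_b haw'.symm
        have hdo : ∀ x, x ≠ a → x ≠ w → H.outdeg ω1 x = H.outdeg ω x :=
          fun x hxa hxw => push_outdeg_other hxa hxw
        have hkey : Phi α ω1 + ((H.outdeg ω a - α a + (α a - H.outdeg ω a)) +
              (H.outdeg ω w - α w + (α w - H.outdeg ω w))) =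
            Phi α ω + ((H.outdeg ω1 a - α a + (α a - H.outdeg ω1 a)) +
              (H.outdeg ω1 w - α w + (α w - H.outdeg ω1 w))) := by
          unfold Phi
          exact sum_two_point
            (g := fun x => H.outdeg ω1 x - α x + (α x - H.outdeg ω1 x))
            (g' := fun x => H.outdeg ω x - α x + (α x - H.outdeg ω x)) haw'
            (fun x hxa hxw => by simp only [hdo x hxa hxw])
        by_cases hw : H.outdeg ω w < α w
        · exact ⟨ω1, hω1, by omega⟩
        · push_neg at hw
          have hua : u ≠ a := fun h => by subst h; omega
          have huw : u ≠ w := fun h => by subst h; omega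
          have hu1 : H.outdeg ω1 u < α u := by rw [hdo u hua huw]; exact hu
          have hw1 : α w < H.outdeg ω1 w := by omega
          have hch1 : List.Chain (Arc ω1) w rest := by
            refine chain_mono rest w hch (fun x hx y hr => ?_)
            obtain ⟨f, hf, hfpos⟩ := hr
            have hxa : x ≠ a := fun h => hmem (h ▸ hx)
            exact ⟨f, hf, lt_of_lt_of_le hfpos (push_le hxa f)⟩
          have hlast1 : (w :: rest).getLast? = some u := by
            rw [← List.getLast?_cons_cons (a := a)]; exact hlast
          obtain ⟨ω', hω', hΦ⟩ := ih ω1 hω1 w rest (by simpa using hlen) hch1 hlast1 hw1 hu1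
          exact ⟨ω', hω', by omega⟩

/-- Reachability lemma: from a vertex with excess outdegree, some vertex with deficient
outdegree is reachable along positive arcs. -/
lemma reach_deficient {ω : H.V → H.E → ℕ} (hω : H.IsKOrient k ω) (α : H.V → ℕ)
    (hcond : ∀ S : Finset H.V, H.ConnSub S → k * (H.edgesIn S).card ≤ ∑ v ∈ S, α v)
    {v : H.V} (hv : α v < H.outdeg ω v) :
    ∃ u, H.outdeg ω u < α u ∧ Relation.ReflTransGen (Arc ω) v u := by
  by_contra hcon
  push_neg at hcon
  set S : Finset H.V := Finset.univ.filter (fun u => Relation.ReflTransGen (Arc ω) v u) with hS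
  have hmemS : ∀ u, u ∈ S ↔ Relation.ReflTransGen (Arc ω) v u := by
    intro u
    simp [hS]
  have hvS : v ∈ S := (hmemS v).mpr Relation.ReflTransGen.refl
  have hclosed : ∀ x ∈ S, ∀ y, Arc ω x y → y ∈ S := by
    intro x hx y hxy
    exact (hmemS y).mpr (((hmemS x).mp hx).tail hxy)
  -- S is connected
  have hreach : ∀ u, Relation.ReflTransGen (Arc ω) v u → Relation.ReflTransGen
      (fun a b => a ∈ S ∧ b ∈ S ∧ ∃ e, H.ends e = s(a, b)) v u := by
    intro u hu
    induction hu with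
    | refl => exact Relation.ReflTransGen.refl
    | @tail b c hab hbc ih =>
      have hbS : b ∈ S := (hmemS b).mpr hab
      have hcS : c ∈ S := (hmemS c).mpr (hab.tail hbc)
      obtain ⟨e, he, _⟩ := hbc
      exact ih.tail ⟨hbS, hcS, e, he⟩
  have hconn : H.ConnSub S := by
    refine ⟨⟨v, hvS⟩, fun a ha b hb => ?_⟩
    have hsymm : Symmetric (fun a b => a ∈ S ∧ b ∈ S ∧ ∃ e, H.ends e = s(a, b)) := by
      rintro x y ⟨h1, h2, e, he⟩
      exact ⟨h2, h1, e, he.trans Sym2.eq_swap⟩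
    exact ((@Std.Symm.symm _ _ (@Relation.ReflTransGen.stdSymm _ _ ⟨fun x y h => hsymm h⟩) _ _) (hreach a ((hmemS a).mp ha))).trans
      (hreach b ((hmemS b).mp hb))
  -- outdegree sum over S equals k * |E_S|
  have hzero : ∀ e : H.E, e ∉ H.edgesIn S → ∑ x ∈ S, ω x e = 0 := by
    intro e he
    refine Finset.sum_eq_zero (fun x hx => ?_)
    by_contra hne
    have hxe : x ∈ H.ends e := by
      by_contra hout
      exact hne (hω.2 x e hout)
    obtain ⟨p, q, hpq, _⟩ := exists_ends e
    have hy : ∃ y, H.ends e = s(x, y) := by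
      rw [hpq] at hxe
      rcases Sym2.mem_iff.mp hxe with h | h
      · exact ⟨q, by rw [hpq, h]⟩
      · exact ⟨p, by rw [hpq, h, Sym2.eq_swap]⟩
    obtain ⟨y, hy⟩ := hy
    have hyS : y ∈ S := hclosed x hx y ⟨e, hy, Nat.pos_of_ne_zero hne⟩
    apply he
    simp only [edgesIn, Finset.mem_filter, Finset.mem_univ, true_and]
    intro z hz
    rw [hy, Sym2.mem_iff] at hz
    rcases hz with h | h
    · exact h ▸ hx
    · exact h ▸ hyS
  have hsumS : ∑ x ∈ S, H.outdeg ω x = k * (H.edgesIn S).card := by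
    have h1 : ∑ x ∈ S, H.outdeg ω x = ∑ e : H.E, ∑ x ∈ S, ω x e := Finset.sum_comm
    rw [h1, ← Finset.sum_subset (Finset.subset_univ (H.edgesIn S))
      (fun e _ he => hzero e he)]
    rw [Finset.sum_congr rfl (fun e he => sum_arc_in hω he)]
    simp [mul_comm]
  -- contradiction
  have hlt : ∑ x ∈ S, α x < ∑ x ∈ S, H.outdeg ω x := by
    refine Finset.sum_lt_sum (fun x hx => ?_) ⟨v, hvS, hv⟩
    exact le_of_not_gt (fun h => hcon x h ((hmemS x).mp hx))
  have := hcond S hconn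
  omega

lemma exists_excess {ω : H.V → H.E → ℕ} {α : H.V → ℕ}
    (hsum : ∑ v : H.V, H.outdeg ω v = ∑ v : H.V, α v)
    {v0 : H.V} (hne : H.outdeg ω v0 ≠ α v0) : ∃ v, α v < H.outdeg ω v := by
  by_contra hcon
  push_neg at hcon
  have : ∑ v : H.V, H.outdeg ω v < ∑ v : H.V, α v :=
    Finset.sum_lt_sum (fun v _ => hcon v) ⟨v0, Finset.mem_univ v0, lt_of_le_of_ne (hcon v0) hne⟩
  omega

lemma main_construction (α : H.V → ℕ)
    (hsum : ∑ v : H.V, α v = k * Fintype.card H.E)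
    (hcond : ∀ S : Finset H.V, H.ConnSub S → k * (H.edgesIn S).card ≤ ∑ v ∈ S, α v) :
    ∀ n (ω : H.V → H.E → ℕ), H.IsKOrient k ω → Phi α ω ≤ n →
      ∃ ω', H.IsKOrient k ω' ∧ ∀ v, H.outdeg ω' v = α v := by
  intro n
  induction n with
  | zero =>
    intro ω hω hΦ
    refine ⟨ω, hω, fun v => ?_⟩
    have h0 : Phi α ω = 0 := Nat.le_zero.mp hΦ
    have := (Finset.sum_eq_zero_iff.mp h0) v (Finset.mem_univ v)
    omega
  | succ n ih =>
    intro ω hω hΦ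
    by_cases hall : ∀ v, H.outdeg ω v = α v
    · exact ⟨ω, hω, hall⟩
    · push_neg at hall
      obtain ⟨v0, hv0⟩ := hall
      have hsum2 : ∑ v : H.V, H.outdeg ω v = ∑ v : H.V, α v := by
        rw [sum_outdeg hω, hsum]
      obtain ⟨v, hv⟩ := exists_excess hsum2 hv0
      obtain ⟨u, hu, hreach⟩ := reach_deficient hω α hcond hv
      obtain ⟨l, hch, hlast⟩ := List.exists_isChain_cons_of_relationReflTransGen hreach
      have hlast? : (v :: l).getLast? = some u := by
        rw [List.getLast?_eq_getLast (List.cons_ne_nil _ _), hlast]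
      obtain ⟨ω1, hω1, hΦ1⟩ :=
        pushPath α u l.length ω hω v l le_rfl hch hlast? hv hu
      exact ih ω1 hω1 (by omega)

end Multigraph

/-- A graph `H` has a `k`-fractional orientation with outdegree `α(v)` at every
vertex `v` iff `Σ α(v) = k·|E|` and `Σ_{v∈S} α(v) ≥ k·|E_S|` for every connected `S ⊆ V`. -/
theorem stmt2 (H : Multigraph) (k : ℕ) (hk : 0 < k) (α : H.V → ℕ) :
    (∃ ω : H.V → H.E → ℕ, H.IsKOrient k ω ∧ ∀ v, H.outdeg ω v = α v) ↔
      ((∑ v : H.V, α v) = k * Fintype.card H.E ∧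
        ∀ S : Finset H.V, H.ConnSub S → k * (H.edgesIn S).card ≤ ∑ v ∈ S, α v) := by
  constructor
  · rintro ⟨ω, hω, hα⟩
    constructor
    · rw [← Multigraph.sum_outdeg hω]
      exact Finset.sum_congr rfl (fun v _ => (hα v).symm)
    · intro S hS
      calc k * (H.edgesIn S).card ≤ ∑ v ∈ S, H.outdeg ω v := Multigraph.sum_outdeg_subset hω S
        _ = ∑ v ∈ S, α v := Finset.sum_congr rfl (fun v _ => hα v)
  · rintro ⟨hsum, hcond⟩
    -- build an initial orientation
    have hch : ∀ e : H.E, ∃ p : H.V × H.V, H.ends e = s(p.1, p.2) := by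
      intro e
      obtain ⟨a, b, he, _⟩ := Multigraph.exists_ends e
      exact ⟨(a, b), he⟩
    choose p hp using hch
    have hω0K : H.IsKOrient k (fun v e => if v = (p e).1 then k else 0) := by
      constructor
      · intro e u v he
        have hpe := hp e
        have hne : (p e).1 ≠ (p e).2 := by
          intro h
          exact H.loopless e (by rw [hpe, Sym2.mk_isDiag_iff]; exact h)
        rw [hpe] at he
        rcases Sym2.eq_iff.mp he with ⟨h1, h2⟩ | ⟨h1, h2⟩
        · subst h1; subst h2
          simp [hne.symm]
        · subst h1; subst h2
          simp [hne.symm]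
      · intro u e hu
        have h1 : u ≠ (p e).1 := by
          intro h
          exact hu (by rw [hp e, h]; exact Sym2.mem_mk_left _ _)
        simp only []
        rw [if_neg h1]
    exact Multigraph.main_construction α hsum hcond
      (H.Phi α (fun v e => if v = (p e).1 then k else 0)) _ hω0K le_rfl
end
end

section
/- In a Schnyder decomposition of a d-angulation of girth d, no forest F_i contains a directed cycle; equivalently, every monochromatic directed path starting at an internal vertex eventually reaches an external vertex. -/
open scoped Classical

noncomputable section

/-- The setoid identifying elements lying on the same cycle of a permutation. -/
def sameCycleSetoid {α : Type*} (f : Equiv.Perm α) : Setoid α :=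
  ⟨f.SameCycle, ⟨fun _ => Equiv.Perm.SameCycle.refl f _, fun h => h.symm, fun h h' => h.trans h'⟩⟩

/-- A connected plane map all of whose faces have degree `d` (a `d`-angulation), encoded as a
rotation system on darts: `σ` is the clockwise rotation around vertices, `θ` the dart reversal.
Vertices are the `σ`-cycles, edges the `θ`-cycles, faces the `σ * θ`-cycles; planarity is the
Euler relation `V + F = E + 2`.  The external face is enumerated by `outer`. -/
structure PlaneDAng (d : ℕ) where
  D : Type
  [finD : Fintype D]
  [decD : DecidableEq D]
  σ : Equiv.Perm D
  θ : Equiv.Perm D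
  θ_invol : Function.Involutive ⇑θ
  θ_ne : ∀ a, θ a ≠ a
  nonemptyD : Nonempty D
  connected : ∀ a b : D, Relation.ReflTransGen (fun x y => y = σ x ∨ y = θ x) a b
  euler : Nat.card (Quotient (sameCycleSetoid σ)) + Nat.card (Quotient (sameCycleSetoid (σ * θ)))
        = Nat.card (Quotient (sameCycleSetoid θ)) + 2
  outer : ZMod d → D
  outer_face : ∀ i, (σ * θ) (outer i) = outer (i + 1)
  outer_inj : Function.Injective outer
  face_deg : ∀ a : D, Function.minimalPeriod ⇑(σ * θ) a = d

attribute [instance] PlaneDAng.finD PlaneDAng.decD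

namespace PlaneDAng

variable {d : ℕ} (M : PlaneDAng d)

/-- Two darts have the same initial vertex. -/
def SameVert (a b : M.D) : Prop := M.σ.SameCycle a b

/-- The vertex of `a` is an external vertex (`uᵢ` being the vertex of `outer i`). -/
def ExtVert (a : M.D) : Prop := ∃ i, M.σ.SameCycle a (M.outer i)

/-- The edge of `a` is an external edge. -/
def ExtEdge (a : M.D) : Prop := ∃ i, M.outer i = a ∨ M.outer i = M.θ a

/-- The darts with the same initial vertex as `a`, i.e. the arcs going out of that vertex. -/
def vertexDarts (a : M.D) : Finset M.D := Finset.univ.filter (fun b => M.σ.SameCycle a b)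

/-- A simple cycle of length `ℓ` in the underlying graph of the map: a cyclic sequence of darts,
consecutive ones sharing a vertex, with pairwise distinct vertices and pairwise distinct edges. -/
def IsCycle (ℓ : ℕ) (c : ZMod ℓ → M.D) : Prop :=
  0 < ℓ ∧ (∀ i, M.σ.SameCycle (M.θ (c i)) (c (i + 1))) ∧
    (∀ i j, M.σ.SameCycle (c i) (c j) → i = j) ∧
    (∀ i j, c i = c j ∨ c i = M.θ (c j) → i = j)

/-- The girth of the map is `g`: there is a cycle of length `g` and no shorter cycle. -/
def HasGirth (g : ℕ) : Prop :=
  (∃ c : ZMod g → M.D, M.IsCycle g c) ∧ ∀ ℓ (c : ZMod ℓ → M.D), M.IsCycle ℓ c → g ≤ ℓ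

end PlaneDAng

/-- `cycDist n x y` is the number of clockwise steps from position `x` to position `y` in a
cyclic sequence of length `n` (positions taken in `{0,…,n-1}`). -/
def cycDist (n x y : ℕ) : ℕ := (y + n - x) % n

/-- `y` lies strictly between `x` and `z` in clockwise cyclic order (length `n`). -/
def cycBetween (n x y z : ℕ) : Prop := 0 < cycDist n x y ∧ cycDist n x y < cycDist n x z

namespace PlaneDAng

variable {d : ℕ} (M : PlaneDAng d)

/-- The conditions on a Schnyder decomposition that do not assert the forest (acyclicity)
property.  `Col a` is the set of colors `i ∈ ℤ/dℤ` of the forests `Fᵢ` using the arc `a`: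
* `disj`/`edge_count`/`ext_edge`: every internal edge carries exactly `d - 2` colors,
  each in one of its two directions, and external edges carry no color (condition (i));
* `root_out`/`avoid`/`span`: arcs out of external vertices carry no color, the forest `Fᵢ`
  avoids the external vertices `uᵢ, u_{i+1}` and reaches every other external vertex, each
  internal vertex has exactly one outgoing arc of each color (condition (ii), except that the
  subgraphs are forests oriented towards the external vertices);
* `cw`: around each internal vertex the outgoing arcs of colors `1,…,d` appear in clockwise
  order (positions `p i` weakly increasing along the clockwise rotation `σ`), and every
  incoming arc of color `i` lies strictly between the outgoing arcs of colors `i+1` and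
  `i-1` in clockwise order (condition (iii)). -/
structure IsSchnyderData (Col : M.D → Finset (ZMod d)) : Prop where
  disj : ∀ a, Disjoint (Col a) (Col (M.θ a))
  ext_edge : ∀ a, M.ExtEdge a → Col a = ∅
  edge_count : ∀ a, ¬ M.ExtEdge a → (Col a).card + (Col (M.θ a)).card = d - 2
  root_out : ∀ a, M.ExtVert a → Col a = ∅
  avoid : ∀ (i : ZMod d) (a : M.D), M.σ.SameCycle (M.outer i) a →
      i ∉ Col a ∧ i ∉ Col (M.θ a) ∧ i - 1 ∉ Col a ∧ i - 1 ∉ Col (M.θ a)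
  span : ∀ i j : ZMod d, j ≠ i → j ≠ i + 1 →
      ∃ a, M.σ.SameCycle (M.outer j) a ∧ i ∈ Col (M.θ a)
  out_unique : ∀ a, ¬ M.ExtVert a → ∀ i : ZMod d, ∃! b, M.σ.SameCycle a b ∧ i ∈ Col b
  cw : ∀ a, ¬ M.ExtVert a → ∃ (b : M.D) (p : ZMod d → ℕ),
      M.σ.SameCycle a b ∧
      (∀ i, p i < Function.minimalPeriod ⇑M.σ b) ∧
      (∀ i j : ZMod d, i.val ≤ j.val → p i ≤ p j) ∧
      (∀ (i : ZMod d) (c : M.D), (M.σ.SameCycle b c ∧ i ∈ Col c) ↔ c = (⇑M.σ)^[p i] b) ∧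
      (∀ (i : ZMod d) (c : M.D), M.σ.SameCycle b c → i ∈ Col (M.θ c) →
        ∀ m, m < Function.minimalPeriod ⇑M.σ b → c = (⇑M.σ)^[m] b →
          cycBetween (Function.minimalPeriod ⇑M.σ b) (p (i + 1)) m (p (i - 1)))

/-- There is a directed cycle of color `i`. -/
def HasMonochromaticCycle (Col : M.D → Finset (ZMod d)) (i : ZMod d) : Prop :=
  ∃ (n : ℕ) (c : ZMod (n + 1) → M.D),
    (∀ k, i ∈ Col (c k)) ∧ ∀ k, M.σ.SameCycle (M.θ (c k)) (c (k + 1))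

/-- A Schnyder decomposition: the data conditions together with the requirement that each
colored subgraph is a forest (no monochromatic directed cycle), hence a union of trees
oriented towards the external vertices. -/
structure IsSchnyder (Col : M.D → Finset (ZMod d)) extends M.IsSchnyderData Col : Prop where
  acyclic : ∀ i : ZMod d, ¬ M.HasMonochromaticCycle Col i

end PlaneDAng


namespace SchnyderAux

set_option linter.unusedSectionVars false

lemma z2_add_eq_zero_iff : ∀ a b : ZMod 2, a + b = 0 ↔ a = b := by decide

variable {d : ℕ} {M : PlaneDAng d}

abbrev VQ (M : PlaneDAng d) := Quotient (sameCycleSetoid M.σ)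
abbrev EQ (M : PlaneDAng d) := Quotient (sameCycleSetoid M.θ)
abbrev FQ (M : PlaneDAng d) := Quotient (sameCycleSetoid (M.σ * M.θ))

def vq (M : PlaneDAng d) (a : M.D) : VQ M := Quotient.mk _ a
def eqc (M : PlaneDAng d) (a : M.D) : EQ M := Quotient.mk _ a
def fq (M : PlaneDAng d) (a : M.D) : FQ M := Quotient.mk _ a

noncomputable instance : Fintype (VQ M) :=
  @Quotient.fintype _ _ _ (fun _ _ => Classical.propDecidable _)
noncomputable instance : Fintype (EQ M) :=
  @Quotient.fintype _ _ _ (fun _ _ => Classical.propDecidable _)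
noncomputable instance : Fintype (FQ M) :=
  @Quotient.fintype _ _ _ (fun _ _ => Classical.propDecidable _)

lemma vq_eq_iff {a b : M.D} : vq M a = vq M b ↔ M.σ.SameCycle a b := by
  unfold vq
  exact ⟨fun h => Quotient.exact h, fun h => Quotient.sound h⟩

lemma vq_surj : Function.Surjective (vq M) := Quotient.exists_rep

lemma eqc_surj : Function.Surjective (eqc M) := Quotient.exists_rep

lemma fq_surj : Function.Surjective (fq M) := Quotient.exists_rep

lemma theta_theta (a : M.D) : M.θ (M.θ a) = a := M.θ_invol a

lemma vq_sigma (a : M.D) : vq M (M.σ a) = vq M a :=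
  Quotient.sound ⟨-1, by simp⟩

lemma vq_sigma_iter (n : ℕ) (a : M.D) : vq M ((⇑M.σ)^[n] a) = vq M a := by
  induction n with
  | zero => rfl
  | succ n ih => rw [Function.iterate_succ_apply', vq_sigma, ih]

lemma eqc_theta (a : M.D) : eqc M (M.θ a) = eqc M a :=
  Quotient.sound ⟨1, by simp [theta_theta]⟩

lemma fq_theta (a : M.D) : fq M (M.θ a) = fq M (M.σ a) :=
  Quotient.sound ⟨1, by simp [Equiv.Perm.mul_apply, theta_theta]⟩

lemma sameCycle_theta_iff {a b : M.D} : M.θ.SameCycle a b ↔ b = a ∨ b = M.θ a := by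
  constructor
  · rintro ⟨z, rfl⟩
    have h2 : M.θ ^ (2 : ℤ) = 1 := by
      rw [zpow_two]; ext x; simp [Equiv.Perm.mul_apply, theta_theta]
    have hz : M.θ ^ z = M.θ ^ (z % 2) := by
      conv_lhs => rw [← Int.mul_ediv_add_emod z 2]
      rw [zpow_add, zpow_mul, h2, one_zpow, one_mul]
    rcases Int.emod_two_eq z with h | h <;> rw [hz, h] <;> simp
  · rintro (rfl | rfl)
    · exact Equiv.Perm.SameCycle.refl _ _
    · exact ⟨1, by simp⟩

lemma eqc_eq_iff {a b : M.D} : eqc M a = eqc M b ↔ (a = b ∨ a = M.θ b) := by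
  rw [show (eqc M a = eqc M b) ↔ M.θ.SameCycle a b by
      unfold eqc; exact ⟨fun h => Quotient.exact h, fun h => Quotient.sound h⟩,
    sameCycle_theta_iff]
  constructor
  · rintro (rfl | rfl)
    · exact Or.inl rfl
    · exact Or.inr (theta_theta a).symm
  · rintro (rfl | rfl)
    · exact Or.inl rfl
    · exact Or.inr (theta_theta b).symm

/-- The boundary operator from faces to edges. -/
def bmap (M : PlaneDAng d) (g : FQ M → ZMod 2) (e : EQ M) : ZMod 2 :=
  ∑ a ∈ Finset.univ.filter (fun a => eqc M a = e), g (fq M a)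

/-- The incidence operator from edges to vertices. -/
def dmap (M : PlaneDAng d) (f : EQ M → ZMod 2) (v : VQ M) : ZMod 2 :=
  ∑ a ∈ Finset.univ.filter (fun a => vq M a = v), f (eqc M a)

lemma edge_fiber (a : M.D) :
    Finset.univ.filter (fun x => eqc M x = eqc M a) = ({a, M.θ a} : Finset M.D) := by
  ext x
  simp only [Finset.mem_filter, Finset.mem_univ, true_and, Finset.mem_insert,
    Finset.mem_singleton]
  rw [eqc_eq_iff]

lemma bmap_eqc (g : FQ M → ZMod 2) (a : M.D) :
    bmap M g (eqc M a) = g (fq M a) + g (fq M (M.θ a)) := by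
  rw [bmap, edge_fiber, Finset.sum_insert (by simp [Ne.symm (M.θ_ne a)]),
    Finset.sum_singleton]

lemma dmap_add (f g : EQ M → ZMod 2) : dmap M (f + g) = dmap M f + dmap M g := by
  funext v; simp [dmap, Finset.sum_add_distrib]

lemma bmap_add (f g : FQ M → ZMod 2) : bmap M (f + g) = bmap M f + bmap M g := by
  funext e; simp [bmap, Finset.sum_add_distrib]

def blin (M : PlaneDAng d) : (FQ M → ZMod 2) →ₗ[ZMod 2] (EQ M → ZMod 2) where
  toFun := bmap M
  map_add' := bmap_add
  map_smul' c f := by funext e; simp [bmap, Finset.mul_sum]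

def dlin (M : PlaneDAng d) : (EQ M → ZMod 2) →ₗ[ZMod 2] (VQ M → ZMod 2) where
  toFun := dmap M
  map_add' := dmap_add
  map_smul' c f := by funext v; simp [dmap, Finset.mul_sum]

def slin (M : PlaneDAng d) : (VQ M → ZMod 2) →ₗ[ZMod 2] ZMod 2 where
  toFun h := ∑ v, h v
  map_add' f g := by simp [Finset.sum_add_distrib]
  map_smul' c f := by simp [Finset.mul_sum]

lemma dmap_bmap (g : FQ M → ZMod 2) (v : VQ M) : dmap M (bmap M g) v = 0 := by
  rw [dmap]
  rw [Finset.sum_congr rfl (fun a _ => bmap_eqc g a)]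
  rw [Finset.sum_add_distrib]
  have hre : ∑ a ∈ Finset.univ.filter (fun a => vq M a = v), g (fq M (M.θ a))
      = ∑ a ∈ Finset.univ.filter (fun a => vq M a = v), g (fq M a) := by
    rw [Finset.sum_congr rfl (fun a _ => by rw [fq_theta])]
    apply Finset.sum_nbij' (fun a => M.σ a) (fun a => M.σ⁻¹ a)
    · intro a ha
      simp only [Finset.mem_filter, Finset.mem_univ, true_and] at ha ⊢
      rw [vq_sigma, ha]
    · intro a ha
      simp only [Finset.mem_filter, Finset.mem_univ, true_and] at ha ⊢
      rw [← ha, ← vq_sigma (M.σ⁻¹ a), show M.σ (M.σ⁻¹ a) = a by simp]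
    · intro a _; simp
    · intro a _; simp
    · intro a _; rfl
  rw [hre, CharTwo.add_self_eq_zero]

lemma blin_apply (g : FQ M → ZMod 2) : blin M g = bmap M g := rfl

lemma dlin_apply (f : EQ M → ZMod 2) : dlin M f = dmap M f := rfl

lemma blin_one : blin M (fun _ => 1) = 0 := by
  funext e
  obtain ⟨a, rfl⟩ := eqc_surj e
  rw [blin_apply, bmap_eqc, Pi.zero_apply]
  exact CharTwo.add_self_eq_zero _

/-- kernel of the face boundary map consists of constants. -/
lemma ker_blin_const {g : FQ M → ZMod 2} (hg : blin M g = 0) (a b : M.D) :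
    g (fq M a) = g (fq M b) := by
  have key : ∀ x y : M.D, (y = M.σ x ∨ y = M.θ x) → g (fq M x) = g (fq M y) := by
    rintro x y (rfl | rfl)
    · have h0 : blin M g (eqc M x) = (0 : EQ M → ZMod 2) (eqc M x) := congrFun hg (eqc M x)
      rw [blin_apply, Pi.zero_apply] at h0
      rw [bmap_eqc] at h0
      rw [z2_add_eq_zero_iff] at h0
      rw [h0, fq_theta]
    · have h0 : blin M g (eqc M x) = (0 : EQ M → ZMod 2) (eqc M x) := congrFun hg (eqc M x)
      rw [blin_apply, Pi.zero_apply] at h0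
      rw [bmap_eqc] at h0
      rw [z2_add_eq_zero_iff] at h0
      exact h0
  have := M.connected a b
  induction this with
  | refl => rfl
  | tail _ hstep ih => rw [ih, key _ _ hstep]


lemma z2_cancel : ∀ a b c : ZMod 2, (a + b) + (b + c) = a + c := by decide

instance : Fact (Nat.Prime 2) := ⟨Nat.prime_two⟩

/-- indicator of a vertex -/
def chiV (M : PlaneDAng d) (v : VQ M) : VQ M → ZMod 2 := fun w => if w = v then 1 else 0

lemma slin_dlin (f : EQ M → ZMod 2) : slin M (dlin M f) = 0 := by
  show ∑ v, dmap M f v = 0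
  unfold dmap
  rw [Finset.sum_fiberwise Finset.univ (vq M) (fun a => f (eqc M a))]
  have : ∀ e : EQ M, ∑ a ∈ Finset.univ.filter (fun a => eqc M a = e), f (eqc M a) = 0 := by
    intro e
    obtain ⟨r, rfl⟩ := eqc_surj e
    rw [edge_fiber, Finset.sum_insert (by simp [Ne.symm (M.θ_ne r)]), Finset.sum_singleton,
      eqc_theta]
    exact CharTwo.add_self_eq_zero _
  calc ∑ a : M.D, f (eqc M a)
      = ∑ e : EQ M, ∑ a ∈ Finset.univ.filter (fun a => eqc M a = e), f (eqc M a) :=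
        (Finset.sum_fiberwise Finset.univ (eqc M) (fun a => f (eqc M a))).symm
    _ = 0 := by rw [Finset.sum_congr rfl (fun e _ => this e), Finset.sum_const_zero]

lemma dlin_chiE (c : M.D) :
    dlin M (fun e => if e = eqc M c then 1 else 0)
      = chiV M (vq M c) + chiV M (vq M (M.θ c)) := by
  funext v
  rw [dlin_apply, dmap]
  have hset : (Finset.univ.filter (fun a => vq M a = v)).filter
        (fun a => eqc M a = eqc M c)
      = ({c, M.θ c} : Finset M.D).filter (fun a => vq M a = v) := by
    ext x
    simp only [Finset.mem_filter, Finset.mem_univ, true_and, Finset.mem_insert,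
      Finset.mem_singleton]
    rw [eqc_eq_iff]
    tauto
  simp only [Finset.sum_boole]
  rw [hset]
  simp only [Pi.add_apply, chiV, Finset.filter_insert, Finset.filter_singleton]
  have hne : c ∉ ({M.θ c} : Finset M.D) := by simp [Ne.symm (M.θ_ne c)]
  by_cases h1 : vq M c = v <;> by_cases h2 : vq M (M.θ c) = v
  · rw [if_pos h1, if_pos h2, if_pos h1.symm, if_pos h2.symm,
      Finset.card_insert_of_notMem hne, Finset.card_singleton]
    decide
  · rw [if_pos h1, if_neg h2, if_pos h1.symm, if_neg (fun h => h2 h.symm)]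
    simp
  · rw [if_neg h1, if_pos h2, if_neg (fun h => h1 h.symm), if_pos h2.symm]
    simp
  · rw [if_neg h1, if_neg h2, if_neg (fun h => h1 h.symm), if_neg (fun h => h2 h.symm)]
    simp

lemma chi_pair_mem (a b : M.D) :
    chiV M (vq M a) + chiV M (vq M b) ∈ LinearMap.range (dlin M) := by
  have := M.connected a b
  induction this with
  | refl =>
      have : chiV M (vq M a) + chiV M (vq M a) = 0 := by
        funext w; exact CharTwo.add_self_eq_zero _
      rw [this]; exact Submodule.zero_mem _
  | @tail x y _ hstep ih =>
      rcases hstep with rfl | rfl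
      · rwa [vq_sigma]
      · have h2 : chiV M (vq M x) + chiV M (vq M (M.θ x)) ∈ LinearMap.range (dlin M) :=
          ⟨_, dlin_chiE x⟩
        have : chiV M (vq M a) + chiV M (vq M (M.θ x))
            = (chiV M (vq M a) + chiV M (vq M x))
              + (chiV M (vq M x) + chiV M (vq M (M.θ x))) := by
          funext w; exact (z2_cancel _ _ _).symm
        rw [this]
        exact Submodule.add_mem _ ih h2

lemma range_dlin_eq : LinearMap.range (dlin M) = LinearMap.ker (slin M) := by
  apply le_antisymm
  · rintro _ ⟨f, rfl⟩
    exact LinearMap.mem_ker.mpr (slin_dlin f)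
  · intro h hh
    have hsum : ∑ v, h v = 0 := hh
    obtain ⟨a0⟩ := M.nonemptyD
    have hrep : h = ∑ v : VQ M, h v • (chiV M v + chiV M (vq M a0)) := by
      funext w
      rw [Finset.sum_apply]
      have : ∀ v : VQ M, (h v • (chiV M v + chiV M (vq M a0))) w
          = (if w = v then h v else 0) + h v * (chiV M (vq M a0) w) := by
        intro v
        simp only [Pi.smul_apply, Pi.add_apply, smul_eq_mul, chiV, mul_add]
        by_cases hwv : w = v <;> simp [hwv]
      rw [Finset.sum_congr rfl (fun v _ => this v), Finset.sum_add_distrib,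
        Finset.sum_ite_eq Finset.univ w h, ← Finset.sum_mul, hsum]
      simp
    rw [hrep]
    exact Submodule.sum_mem _ (fun v _ => Submodule.smul_mem _ _
      (by obtain ⟨av, rfl⟩ := vq_surj v; exact chi_pair_mem av a0))

lemma slin_surj : Function.Surjective (slin M) := by
  intro c
  obtain ⟨a0⟩ := M.nonemptyD
  refine ⟨c • chiV M (vq M a0), ?_⟩
  rw [map_smul]
  have : slin M (chiV M (vq M a0)) = 1 := by
    show ∑ v, chiV M (vq M a0) v = 1
    unfold chiV
    rw [Finset.sum_ite_eq' Finset.univ (vq M a0) (fun _ => (1:ZMod 2))]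
    simp
  rw [this, smul_eq_mul, mul_one]

lemma ker_blin_eq :
    LinearMap.ker (blin M) = Submodule.span (ZMod 2) {(fun _ => (1:ZMod 2) : FQ M → ZMod 2)} := by
  apply le_antisymm
  · intro g hg
    rw [Submodule.mem_span_singleton]
    obtain ⟨a0⟩ := M.nonemptyD
    refine ⟨g (fq M a0), ?_⟩
    funext f
    obtain ⟨a, rfl⟩ := fq_surj f
    have : g (fq M a) = g (fq M a0) := ker_blin_const (LinearMap.mem_ker.mp hg) a a0
    simp [this]
  · rw [Submodule.span_le, Set.singleton_subset_iff]
    exact LinearMap.mem_ker.mpr blin_one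

lemma exists_potential {k : EQ M → ZMod 2} (hk : dlin M k = 0) :
    ∃ S : FQ M → ZMod 2, blin M S = k := by
  obtain ⟨a0⟩ := M.nonemptyD
  have hVpos : 1 ≤ Fintype.card (VQ M) := Fintype.card_pos_iff.mpr ⟨vq M a0⟩
  have hFpos : 1 ≤ Fintype.card (FQ M) := Fintype.card_pos_iff.mpr ⟨fq M a0⟩
  have heuler : Fintype.card (VQ M) + Fintype.card (FQ M) = Fintype.card (EQ M) + 2 := by
    have := M.euler
    rwa [Nat.card_eq_fintype_card, Nat.card_eq_fintype_card, Nat.card_eq_fintype_card] at this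
  -- rank computations
  have hd1 : Module.finrank (ZMod 2) (LinearMap.range (dlin M))
      + Module.finrank (ZMod 2) (LinearMap.ker (dlin M)) = Fintype.card (EQ M) := by
    rw [LinearMap.finrank_range_add_finrank_ker, Module.finrank_fintype_fun_eq_card]
  have hs1 : Module.finrank (ZMod 2) (LinearMap.range (slin M))
      + Module.finrank (ZMod 2) (LinearMap.ker (slin M)) = Fintype.card (VQ M) := by
    rw [LinearMap.finrank_range_add_finrank_ker, Module.finrank_fintype_fun_eq_card]
  have hstop : LinearMap.range (slin M) = ⊤ := LinearMap.range_eq_top.mpr slin_surj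
  have hs2 : Module.finrank (ZMod 2) (LinearMap.range (slin M)) = 1 := by
    rw [hstop, finrank_top, Module.finrank_self]
  have hb1 : Module.finrank (ZMod 2) (LinearMap.range (blin M))
      + Module.finrank (ZMod 2) (LinearMap.ker (blin M)) = Fintype.card (FQ M) := by
    rw [LinearMap.finrank_range_add_finrank_ker, Module.finrank_fintype_fun_eq_card]
  have hb2 : Module.finrank (ZMod 2) (LinearMap.ker (blin M)) = 1 := by
    rw [ker_blin_eq]
    apply finrank_span_singleton
    intro hcon
    have := congrFun hcon (fq M a0)
    simp at this
  have hrange : Module.finrank (ZMod 2) (LinearMap.range (dlin M))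
      = Fintype.card (VQ M) - 1 := by
    rw [range_dlin_eq]; omega
  have hle : LinearMap.range (blin M) ≤ LinearMap.ker (dlin M) := by
    rintro _ ⟨g, rfl⟩
    exact LinearMap.mem_ker.mpr (by funext v; exact dmap_bmap g v)
  have heq : LinearMap.range (blin M) = LinearMap.ker (dlin M) := by
    apply Submodule.eq_of_le_of_finrank_le hle
    omega
  have : k ∈ LinearMap.ker (dlin M) := LinearMap.mem_ker.mpr hk
  rw [← heq] at this
  obtain ⟨S, hS⟩ := this
  exact ⟨S, hS⟩


section Schnyder

variable (Col : M.D → Finset (ZMod d))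

/-- helper: sum over a set supported on two distinct points -/
lemma sum_eq_pair {α : Type*} [DecidableEq α] {s : Finset α} {f : α → ZMod 2} {x y : α}
    (hxy : x ≠ y) (hx : x ∈ s) (hy : y ∈ s)
    (h0 : ∀ a ∈ s, a ≠ x → a ≠ y → f a = 0) :
    ∑ a ∈ s, f a = f x + f y := by
  rw [← Finset.sum_subset (s₁ := ({x, y} : Finset α))
      (by intro a ha
          rcases Finset.mem_insert.mp ha with rfl | h
          · exact hx
          · rw [Finset.mem_singleton] at h; subst h; exact hy)
      (by intro a ha hna
          refine h0 a ha ?_ ?_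
          · rintro rfl; exact hna (Finset.mem_insert_self _ _)
          · rintro rfl; exact hna (by simp))]
  rw [Finset.sum_insert (by simp [hxy]), Finset.sum_singleton]

variable {Col}

lemma not_extVert_of_mem (hCol : M.IsSchnyderData Col) {i : ZMod d} {a : M.D}
    (ha : i ∈ Col a) : ¬ M.ExtVert a :=
  fun h => by simp [hCol.root_out a h] at ha

lemma extVert_congr {a b : M.D} (h : vq M a = vq M b) : M.ExtVert a ↔ M.ExtVert b := by
  rw [vq_eq_iff] at h
  constructor
  · rintro ⟨r, hr⟩; exact ⟨r, h.symm.trans hr⟩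
  · rintro ⟨r, hr⟩; exact ⟨r, h.trans hr⟩

lemma same_vertex_eq (hCol : M.IsSchnyderData Col) {j : ZMod d} {a b : M.D}
    (h : vq M a = vq M b) (ha : j ∈ Col a) (hb : j ∈ Col b) : a = b := by
  have hne : ¬ M.ExtVert a := not_extVert_of_mem hCol ha
  obtain ⟨c, hc, hun⟩ := hCol.out_unique a hne j
  rw [hun a ⟨Equiv.Perm.SameCycle.refl _ _, ha⟩, hun b ⟨vq_eq_iff.mp h, hb⟩]

variable (Col) in
/-- the unique `j`-colored dart at the head of `y` (junk if the head is external). -/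
def nxt (j : ZMod d) (y : M.D) : M.D :=
  if h : ∃! b, M.σ.SameCycle (M.θ y) b ∧ j ∈ Col b then h.choose else y

lemma nxt_spec (hCol : M.IsSchnyderData Col) (j : ZMod d) (y : M.D)
    (hy : ¬ M.ExtVert (M.θ y)) :
    M.σ.SameCycle (M.θ y) (nxt Col j y) ∧ j ∈ Col (nxt Col j y) := by
  have h := hCol.out_unique (M.θ y) hy j
  rw [nxt, dif_pos h]
  exact h.choose_spec.1

lemma eq_nxt (hCol : M.IsSchnyderData Col) {j : ZMod d} {y w : M.D}
    (hw : M.σ.SameCycle (M.θ y) w) (hjw : j ∈ Col w) : w = nxt Col j y := by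
  have hne : ¬ M.ExtVert (M.θ y) :=
    fun h => not_extVert_of_mem hCol hjw ((extVert_congr (vq_eq_iff.mpr hw)).mp h)
  have h := hCol.out_unique (M.θ y) hne j
  rw [nxt, dif_pos h]
  exact h.choose_spec.2 w ⟨hw, hjw⟩

variable (Col) in
/-- iterated color-`j` successor -/
def ecy (j : ZMod d) (x : M.D) (t : ℕ) : M.D := (nxt Col j)^[t] x

variable (Col) in
/-- a directed monochromatic cycle of color `i` through `x`. -/
def IsCyc (i : ZMod d) (x : M.D) : Prop :=
  (∃ n, 0 < n ∧ (nxt Col i)^[n] x = x) ∧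
    ∀ t, i ∈ Col (ecy Col i x t) ∧ ¬ M.ExtVert (M.θ (ecy Col i x t))

section CycCtx

variable (hCol : M.IsSchnyderData Col) {i : ZMod d} {x : M.D} (hcyc : IsCyc Col i x)

include hCol hcyc

lemma mper_pos : 0 < Function.minimalPeriod (nxt Col i) x := by
  obtain ⟨⟨n, hn, hper⟩, _⟩ := hcyc
  exact (show Function.IsPeriodicPt (nxt Col i) n x from hper).minimalPeriod_pos hn

lemma ecy_col (t : ℕ) : i ∈ Col (ecy Col i x t) := (hcyc.2 t).1

lemma ecy_head_int (t : ℕ) : ¬ M.ExtVert (M.θ (ecy Col i x t)) := (hcyc.2 t).2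

lemma ecy_succ (t : ℕ) : ecy Col i x (t + 1) = nxt Col i (ecy Col i x t) :=
  Function.iterate_succ_apply' _ _ _

lemma ecy_step (t : ℕ) :
    M.σ.SameCycle (M.θ (ecy Col i x t)) (ecy Col i x (t + 1)) := by
  rw [ecy_succ hCol hcyc]
  exact (nxt_spec hCol i _ (ecy_head_int hCol hcyc t)).1

lemma ecy_not_ext (t : ℕ) : ¬ M.ExtVert (ecy Col i x t) :=
  not_extVert_of_mem hCol (ecy_col hCol hcyc t)

lemma ecy_mod (t : ℕ) :
    ecy Col i x (t % Function.minimalPeriod (nxt Col i) x) = ecy Col i x t :=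
  Function.iterate_mod_minimalPeriod_eq

lemma ecy_add_period (t : ℕ) :
    ecy Col i x (t + Function.minimalPeriod (nxt Col i) x) = ecy Col i x t :=
  Function.iterate_add_minimalPeriod_eq

lemma ecy_inj {t t' : ℕ} (ht : t < Function.minimalPeriod (nxt Col i) x)
    (ht' : t' < Function.minimalPeriod (nxt Col i) x)
    (h : ecy Col i x t = ecy Col i x t') : t = t' :=
  Function.iterate_injOn_Iio_minimalPeriod ht ht' h

lemma ecy_eq_iff_mod {t t' : ℕ}
    (h : ecy Col i x t = ecy Col i x t') :
    t % Function.minimalPeriod (nxt Col i) x = t' % Function.minimalPeriod (nxt Col i) x := by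
  apply ecy_inj hCol hcyc (Nat.mod_lt _ (mper_pos hCol hcyc)) (Nat.mod_lt _ (mper_pos hCol hcyc))
  rw [ecy_mod hCol hcyc, ecy_mod hCol hcyc]
  exact h

lemma ecy_vertex_inj {t t' : ℕ}
    (h : vq M (ecy Col i x t) = vq M (ecy Col i x t')) :
    ecy Col i x t = ecy Col i x t' :=
  same_vertex_eq hCol h (ecy_col hCol hcyc t) (ecy_col hCol hcyc t')

/-- the reversal of a cycle dart is never a cycle dart. -/
lemma ecy_ne_theta (t t' : ℕ) : ecy Col i x t ≠ M.θ (ecy Col i x t') := by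
  intro hcon
  have h1 : i ∈ Col (M.θ (ecy Col i x t')) := hcon ▸ ecy_col hCol hcyc t
  exact Finset.disjoint_left.mp (hCol.disj (ecy Col i x t')) (ecy_col hCol hcyc t') h1

lemma ecy_edge_inj {t t' : ℕ}
    (h : eqc M (ecy Col i x t) = eqc M (ecy Col i x t')) :
    ecy Col i x t = ecy Col i x t' := by
  rcases eqc_eq_iff.mp h with h' | h'
  · exact h'
  · exact absurd h' (ecy_ne_theta hCol hcyc t t')

variable (Col) in
/-- set of edges of the cycle through `x` of color `i`. -/
def ECset (i : ZMod d) (x : M.D) : Set (EQ M) := {c | ∃ t, c = eqc M (ecy Col i x t)}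

variable (Col) in
def kInd (i : ZMod d) (x : M.D) : EQ M → ZMod 2 :=
  fun c => if c ∈ ECset Col i x then 1 else 0

variable (Col) in
def Spot (i : ZMod d) (x : M.D) : FQ M → ZMod 2 :=
  if h : ∃ S, blin M S = kInd Col i x ∧ S (fq M (M.outer 0)) = 0 then h.choose else 0

variable (Col) in
def gfun (i : ZMod d) (x : M.D) : M.D → ZMod 2 := fun a => Spot Col i x (fq M a)

variable (Col) in
/-- color to follow next: `i+1` if the cycle is clockwise, `i-1` otherwise. -/
def jcol (i : ZMod d) (x : M.D) : ZMod d :=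
  if gfun Col i x x = 0 then i + 1 else i - 1

variable (Col) in
def meas (i : ZMod d) (x : M.D) : ℕ :=
  (Finset.univ.filter (fun f => Spot Col i x f = 1)).card

omit hCol hcyc in
lemma z2_solve : ∀ A B K : ZMod 2, A + B = K → B = A + K := by decide

omit hCol hcyc in
lemma z2_oneone : (1 : ZMod 2) + 1 = 0 := by decide

omit hCol hcyc in
lemma cd_form {n u v : ℕ} (hu : u < n) (hv : v < n) :
    cycDist n u v = if u ≤ v then v - u else v + n - u := by
  unfold cycDist
  split
  · rw [show v + n - u = (v - u) + n by omega, Nat.add_mod_right]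
    exact Nat.mod_eq_of_lt (by omega)
  · exact Nat.mod_eq_of_lt (by omega)

omit hCol hcyc in
lemma cd_lt {n u v : ℕ} (hn : 0 < n) : cycDist n u v < n := Nat.mod_lt _ hn

omit hCol hcyc in
lemma cd_eq_zero_iff {n u v : ℕ} (hu : u < n) (hv : v < n) :
    cycDist n u v = 0 ↔ u = v := by
  rw [cd_form hu hv]; split <;> omega

omit hCol hcyc in
lemma cd_add_exp {n u v : ℕ} (hu : u < n) (hv : v < n) :
    (u + cycDist n u v) % n = v := by
  rw [cd_form hu hv]
  split
  · rw [show u + (v - u) = v by omega]; exact Nat.mod_eq_of_lt hv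
  · rw [show u + (v + n - u) = v + n by omega, Nat.add_mod_right]
    exact Nat.mod_eq_of_lt hv

omit hCol hcyc in
lemma mod_window {n a r : ℕ} (ha : a < n) (hr : r < n) :
    (a + r) % n = if a + r < n then a + r else a + r - n := by
  split
  · exact Nat.mod_eq_of_lt (by omega)
  · rw [Nat.mod_eq_sub_mod (by omega)]
    exact Nat.mod_eq_of_lt (by omega)

omit hCol hcyc in
lemma cyc_arith {n X A B mm : ℕ} (hX : X < n) (hA : A < n) (hB : B < n) (hm : mm < n)
    (horder : (B ≤ X ∧ X ≤ A) ∨ (X ≤ A ∧ A ≤ B) ∨ (A ≤ B ∧ B ≤ X))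
    (h1 : 0 < cycDist n A mm) (h2 : cycDist n A mm < cycDist n A B) :
    cycDist n X A ≤ cycDist n X mm ∧ (cycDist n X B = 0 ∨ cycDist n X mm < cycDist n X B) := by
  rw [cd_form hA hm] at h1
  rw [cd_form hA hm, cd_form hA hB] at h2
  rw [cd_form hX hA, cd_form hX hm, cd_form hX hB]
  split_ifs at h1 h2 ⊢ <;> omega

omit hCol hcyc in
lemma order_cases (hd : 3 ≤ d) (i : ZMod d) (p : ZMod d → ℕ)
    (hmono : ∀ a b : ZMod d, a.val ≤ b.val → p a ≤ p b) :
    (p (i-1) ≤ p i ∧ p i ≤ p (i+1)) ∨ (p i ≤ p (i+1) ∧ p (i+1) ≤ p (i-1))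
      ∨ (p (i+1) ≤ p (i-1) ∧ p (i-1) ≤ p i) := by
  haveI : NeZero d := ⟨by omega⟩
  haveI : Fact (1 < d) := ⟨by omega⟩
  have hiv : i.val < d := ZMod.val_lt i
  have hone : (1 : ZMod d).val = 1 := ZMod.val_one d
  have hm1 : (-1 : ZMod d).val = d - 1 := by
    have hcast : ((d - 1 : ℕ) : ZMod d) = -1 := by
      have hd0 : ((d : ℕ) : ZMod d) = 0 := ZMod.natCast_self d
      rw [Nat.cast_sub (by omega : 1 ≤ d), hd0, Nat.cast_one, zero_sub]
    rw [← hcast, ZMod.val_cast_of_lt (by omega)]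
  have hadd : (i + 1).val = (i.val + 1) % d := by rw [ZMod.val_add, hone]
  have hsub : (i - 1).val = (i.val + (d - 1)) % d := by
    rw [sub_eq_add_neg, ZMod.val_add, hm1]
  by_cases h0 : i.val = 0
  · have e1 : (i+1).val = 1 := by rw [hadd, h0]; exact Nat.mod_eq_of_lt (by omega)
    have e2 : (i-1).val = d - 1 := by
      rw [hsub, h0, Nat.zero_add]; exact Nat.mod_eq_of_lt (by omega)
    right; left
    exact ⟨hmono _ _ (by omega), hmono _ _ (by rw [e1, e2]; omega)⟩
  · by_cases hmax : i.val = d - 1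
    · have e1 : (i+1).val = 0 := by
        rw [hadd, hmax, show d - 1 + 1 = d by omega, Nat.mod_self]
      have e2 : (i-1).val = d - 2 := by
        rw [hsub, hmax, show d - 1 + (d - 1) = (d - 2) + d by omega, Nat.add_mod_right]
        exact Nat.mod_eq_of_lt (by omega)
      right; right
      exact ⟨hmono _ _ (by rw [e1, e2]; omega), hmono _ _ (by rw [e2, hmax]; omega)⟩
    · have e1 : (i+1).val = i.val + 1 := by
        rw [hadd]; exact Nat.mod_eq_of_lt (by omega)
      have e2 : (i-1).val = i.val - 1 := by
        rw [hsub, show i.val + (d - 1) = (i.val - 1) + d by omega, Nat.add_mod_right]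
        exact Nat.mod_eq_of_lt (by omega)
      left
      exact ⟨hmono _ _ (by rw [e2]; omega), hmono _ _ (by rw [e1]; omega)⟩

omit hCol hcyc in
lemma z2_flip2 : ∀ X : ZMod 2, X + 1 + 1 = X + 0 := by decide

omit hCol hcyc in
lemma z2_add_right_cancel : ∀ a b : ZMod 2, a + 1 = b + 1 → a = b := by decide

lemma incidence (t : ℕ) (y : M.D) (hy : vq M y = vq M (ecy Col i x (t+1))) :
    eqc M y ∈ ECset Col i x ↔ (y = ecy Col i x (t+1) ∨ y = M.θ (ecy Col i x t)) := by
  constructor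
  · rintro ⟨r, hr⟩
    rcases eqc_eq_iff.mp hr with rfl | rfl
    · left
      exact ecy_vertex_inj hCol hcyc hy
    · right
      have hv : vq M (M.θ (ecy Col i x r)) = vq M (ecy Col i x (r+1)) :=
        vq_eq_iff.mpr (ecy_step hCol hcyc r)
      have : ecy Col i x (r+1) = ecy Col i x (t+1) :=
        ecy_vertex_inj hCol hcyc (hv.symm.trans hy)
      have hmod := ecy_eq_iff_mod hCol hcyc this
      have hmod' : r % Function.minimalPeriod (nxt Col i) x
          = t % Function.minimalPeriod (nxt Col i) x :=
        Nat.ModEq.add_right_cancel' 1 hmod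
      have : ecy Col i x r = ecy Col i x t := by
        rw [← ecy_mod hCol hcyc r, ← ecy_mod hCol hcyc t, hmod']
      rw [this]
  · rintro (rfl | rfl)
    · exact ⟨t+1, rfl⟩
    · exact ⟨t, (eqc_theta _)⟩

lemma cycle_vertex_shift (r : ℕ) :
    ecy Col i x r = ecy Col i x ((r + Function.minimalPeriod (nxt Col i) x - 1) + 1) := by
  have hm := mper_pos hCol hcyc
  rw [show (r + Function.minimalPeriod (nxt Col i) x - 1) + 1
      = r + Function.minimalPeriod (nxt Col i) x by omega]
  exact (ecy_add_period hCol hcyc r).symm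

lemma not_cycle_vertex_no_EC {v : VQ M} (hv : ¬ ∃ r, v = vq M (ecy Col i x r))
    {w : M.D} (hw : vq M w = v) : kInd Col i x (eqc M w) = 0 := by
  rw [kInd, if_neg]
  rintro ⟨r, hr⟩
  rcases eqc_eq_iff.mp hr with rfl | rfl
  · exact hv ⟨r, hw.symm⟩
  · exact hv ⟨r + 1, (hw.symm.trans (vq_eq_iff.mpr (ecy_step hCol hcyc r)))⟩

lemma dlin_kInd : dlin M (kInd Col i x) = 0 := by
  funext v
  rw [dlin_apply, dmap, Pi.zero_apply]
  by_cases hv : ∃ r, v = vq M (ecy Col i x r)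
  · obtain ⟨r, rfl⟩ := hv
    rw [cycle_vertex_shift hCol hcyc r]
    set t := r + Function.minimalPeriod (nxt Col i) x - 1 with ht
    rw [sum_eq_pair (x := ecy Col i x (t+1)) (y := M.θ (ecy Col i x t))
        (Ne.symm (fun h => ecy_ne_theta hCol hcyc (t+1) t h.symm) : ecy Col i x (t+1) ≠ _)
        (by simp only [Finset.mem_filter, Finset.mem_univ, true_and])
        (by simp only [Finset.mem_filter, Finset.mem_univ, true_and]
            exact vq_eq_iff.mpr (ecy_step hCol hcyc t))
        ?_]
    · rw [kInd, if_pos ⟨t+1, rfl⟩, eqc_theta, kInd, if_pos ⟨t, rfl⟩]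
      exact z2_oneone
    · intro a ha h1 h2
      simp only [Finset.mem_filter, Finset.mem_univ, true_and] at ha
      rw [kInd, if_neg]
      intro hmem
      rcases (incidence hCol hcyc t a ha).mp hmem with h | h
      · exact h1 h
      · exact h2 h
  · apply Finset.sum_eq_zero
    intro a ha
    simp only [Finset.mem_filter, Finset.mem_univ, true_and] at ha
    exact not_cycle_vertex_no_EC hCol hcyc hv ha

lemma spot_spec : blin M (Spot Col i x) = kInd Col i x
    ∧ Spot Col i x (fq M (M.outer 0)) = 0 := by
  have hex : ∃ S, blin M S = kInd Col i x ∧ S (fq M (M.outer 0)) = 0 := by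
    obtain ⟨S0, hS0⟩ := exists_potential (M := M)
      (k := kInd Col i x) (by rw [dlin_kInd hCol hcyc])
    refine ⟨S0 + (fun _ => S0 (fq M (M.outer 0))), ?_, ?_⟩
    · rw [map_add, hS0]
      have : (fun _ => S0 (fq M (M.outer 0)) : FQ M → ZMod 2)
          = S0 (fq M (M.outer 0)) • (fun _ => (1 : ZMod 2)) := by
        funext f; simp
      rw [this, map_smul, blin_one, smul_zero, add_zero]
    · simp [CharTwo.add_self_eq_zero]
  rw [Spot, dif_pos hex]
  exact hex.choose_spec

lemma g_theta_k (a : M.D) :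
    gfun Col i x (M.θ a) = gfun Col i x a + kInd Col i x (eqc M a) := by
  have h := congrFun (spot_spec hCol hcyc).1 (eqc M a)
  rw [blin_apply, bmap_eqc] at h
  exact z2_solve _ _ _ h

lemma g_sigma_k (a : M.D) :
    gfun Col i x (M.σ a) = gfun Col i x a + kInd Col i x (eqc M a) := by
  have : gfun Col i x (M.σ a) = gfun Col i x (M.θ a) := by
    unfold gfun; rw [fq_theta]
  rw [this, g_theta_k hCol hcyc]

lemma g_iterate (z : M.D) (nn : ℕ)
    (h0 : ∀ s, s < nn → kInd Col i x (eqc M ((⇑M.σ)^[s] z)) = 0) :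
    gfun Col i x ((⇑M.σ)^[nn] z) = gfun Col i x z := by
  induction nn with
  | zero => rfl
  | succ nn ih =>
      rw [Function.iterate_succ_apply', g_sigma_k hCol hcyc,
        h0 nn (by omega), add_zero, ih (fun s hs => h0 s (by omega))]

lemma g_const_vertex {z y : M.D} (hzy : vq M y = vq M z)
    (hno : ∀ w, vq M w = vq M z → kInd Col i x (eqc M w) = 0) :
    gfun Col i x y = gfun Col i x z := by
  obtain ⟨nn, _, hnn⟩ := (vq_eq_iff.mp hzy.symm).exists_pow_eq'
  have hy : y = (⇑M.σ)^[nn] z := by rw [Equiv.Perm.iterate_eq_pow, hnn]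
  subst hy
  exact g_iterate hCol hcyc z nn (fun s _ => hno _ (vq_sigma_iter s z))

omit hCol hcyc in
lemma fq_outer (hd : 3 ≤ d) (r : ZMod d) : fq M (M.outer r) = fq M (M.outer 0) := by
  haveI : NeZero d := ⟨by omega⟩
  have key : ∀ nn : ℕ, (⇑(M.σ * M.θ))^[nn] (M.outer 0) = M.outer (nn : ZMod d) := by
    intro nn
    induction nn with
    | zero => simp
    | succ nn ih =>
        rw [Function.iterate_succ_apply', ih, M.outer_face]
        push_cast
        ring_nf
  have : (M.σ * M.θ).SameCycle (M.outer 0) (M.outer r) := by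
    refine ⟨(r.val : ℤ), ?_⟩
    rw [zpow_natCast, ← Equiv.Perm.iterate_eq_pow, key r.val, ZMod.natCast_zmod_val]
  exact (Quotient.sound this).symm

lemma ecy_vq_not_ext (t : ℕ) {z : M.D} (hz : vq M z = vq M (ecy Col i x t)) :
    ¬ M.ExtVert z :=
  fun h => (ecy_not_ext hCol hcyc t) ((extVert_congr hz).mp h)

lemma g_ext_zero (hd : 3 ≤ d) {z : M.D} (hz : M.ExtVert z) : gfun Col i x z = 0 := by
  obtain ⟨r, hr⟩ := hz
  have hno : ∀ w, vq M w = vq M (M.outer r) → kInd Col i x (eqc M w) = 0 := by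
    intro w hw
    refine not_cycle_vertex_no_EC hCol hcyc (v := vq M (M.outer r)) ?_ hw
    rintro ⟨t, ht⟩
    exact ecy_vq_not_ext hCol hcyc t ht ⟨r, Equiv.Perm.SameCycle.refl _ _⟩
  rw [show gfun Col i x z = gfun Col i x (M.outer r) from
    g_const_vertex hCol hcyc (vq_eq_iff.mpr hr) hno]
  show Spot Col i x (fq M (M.outer r)) = 0
  rw [fq_outer hd r]
  exact (spot_spec hCol hcyc).2

variable (hd : 3 ≤ d)

include hd

set_option maxHeartbeats 2000000 in
lemma vertex_main (t : ℕ) :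
    gfun Col i x (ecy Col i x (t+1)) = gfun Col i x (ecy Col i x t) ∧
    ∀ w, vq M w = vq M (ecy Col i x (t+1)) → ∀ j : ZMod d, j ∈ Col w →
      (j = i + 1 → (w = ecy Col i x (t+1) ∨
        (eqc M w ∉ ECset Col i x
          ∧ gfun Col i x w = gfun Col i x (ecy Col i x (t+1)) + 1
          ∧ gfun Col i x (M.θ w) = gfun Col i x (ecy Col i x (t+1)) + 1))) ∧
      (j = i - 1 → (w = ecy Col i x (t+1) ∨
        (eqc M w ∉ ECset Col i x
          ∧ gfun Col i x w = gfun Col i x (ecy Col i x (t+1))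
          ∧ gfun Col i x (M.θ w) = gfun Col i x (ecy Col i x (t+1))))) := by
  obtain ⟨b, p, hsc, hplt, hmono, hiff, hbet⟩ :=
    hCol.cw (ecy Col i x (t+1)) (ecy_not_ext hCol hcyc (t+1))
  set E1 := ecy Col i x (t+1) with hE1
  set n : ℕ := Function.minimalPeriod ⇑M.σ b with hndef
  have hnpos : 0 < n := by
    apply Function.minimalPeriod_pos_of_mem_periodicPts
    refine Function.mem_periodicPts.mpr ⟨orderOf M.σ, orderOf_pos M.σ, ?_⟩
    show (⇑M.σ)^[orderOf M.σ] b = b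
    rw [Equiv.Perm.iterate_eq_pow, pow_orderOf_eq_one]
    rfl
  have hiterinj : ∀ u u', u < n → u' < n → (⇑M.σ)^[u] b = (⇑M.σ)^[u'] b → u = u' :=
    fun u u' hu hu' h => Function.iterate_injOn_Iio_minimalPeriod hu hu' h
  have hitermod : ∀ u : ℕ, (⇑M.σ)^[u % n] b = (⇑M.σ)^[u] b :=
    fun u => Function.iterate_mod_minimalPeriod_eq
  have hpos_exist : ∀ y, M.σ.SameCycle b y → ∃ u, u < n ∧ (⇑M.σ)^[u] b = y := by
    intro y hy
    obtain ⟨u0, _, hu0⟩ := hy.exists_pow_eq'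
    rw [← Equiv.Perm.iterate_eq_pow] at hu0
    exact ⟨u0 % n, Nat.mod_lt _ hnpos, by rw [hitermod u0]; exact hu0⟩
  have hbvq : vq M b = vq M E1 := (vq_eq_iff.mpr hsc).symm
  have hout : ∀ (j : ZMod d) (w : M.D), vq M w = vq M E1 → j ∈ Col w
      → w = (⇑M.σ)^[p j] b := by
    intro j w hw hjw
    exact (hiff j w).mp ⟨vq_eq_iff.mp (hbvq.trans hw.symm), hjw⟩
  have he1 : E1 = (⇑M.σ)^[p i] b := hout i E1 rfl (ecy_col hCol hcyc (t+1))
  have hinnvq : vq M (M.θ (ecy Col i x t)) = vq M E1 := vq_eq_iff.mpr (ecy_step hCol hcyc t)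
  obtain ⟨mm, hmmlt, hmm⟩ := hpos_exist (M.θ (ecy Col i x t))
    (vq_eq_iff.mp (hbvq.trans hinnvq.symm))
  have hinncol : i ∈ Col (M.θ (M.θ (ecy Col i x t))) := by
    rw [theta_theta]; exact ecy_col hCol hcyc t
  have hbetween := hbet i (M.θ (ecy Col i x t))
    (vq_eq_iff.mp (hbvq.trans hinnvq.symm)) hinncol mm hmmlt hmm.symm
  have hinne : M.θ (ecy Col i x t) ≠ E1 :=
    fun h => ecy_ne_theta hCol hcyc (t+1) t h.symm
  have hmne : mm ≠ p i := by
    intro h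
    apply hinne
    rw [← hmm, h, ← he1]
  have hEC_iff : ∀ u : ℕ, (eqc M ((⇑M.σ)^[u] b) ∈ ECset Col i x)
      ↔ (u % n = p i ∨ u % n = mm) := by
    intro u
    have hvq : vq M ((⇑M.σ)^[u] b) = vq M E1 := (vq_sigma_iter u b).trans hbvq
    rw [incidence hCol hcyc t _ hvq]
    constructor
    · rintro (h | h)
      · left
        apply hiterinj _ _ (Nat.mod_lt _ hnpos) (hplt i)
        rw [hitermod u, h]
        exact he1
      · right
        apply hiterinj _ _ (Nat.mod_lt _ hnpos) hmmlt
        rw [hitermod u, h, hmm]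
    · rintro (h | h)
      · left; rw [← hitermod u, h, ← he1]
      · right; rw [← hitermod u, h, hmm]
  have hk_val : ∀ u : ℕ, kInd Col i x (eqc M ((⇑M.σ)^[u] b))
      = if (u % n = p i ∨ u % n = mm) then 1 else 0 := by
    intro u
    rw [kInd]
    exact if_congr (hEC_iff u) rfl rfl
  set Δ : ℕ := cycDist n (p i) mm with hΔdef
  have hΔlt : Δ < n := cd_lt hnpos
  have hΔpos : 0 < Δ := by
    rcases Nat.eq_zero_or_pos Δ with h | h
    · exact absurd ((cd_eq_zero_iff (hplt i) hmmlt).mp h) (fun hh => hmne hh.symm)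
    · exact h
  have hsector : ∀ r, r < n → gfun Col i x ((⇑M.σ)^[p i + r] b)
      = gfun Col i x E1 + (if 1 ≤ r ∧ r ≤ Δ then 1 else 0) := by
    intro r
    induction r with
    | zero =>
        intro _
        rw [Nat.add_zero, ← he1, if_neg (by omega), add_zero]
    | succ r ih =>
        intro hr1
        have hstep : (⇑M.σ)^[p i + (r+1)] b = M.σ ((⇑M.σ)^[p i + r] b) := by
          rw [show p i + (r+1) = (p i + r) + 1 by ring, Function.iterate_succ_apply']
        rw [hstep, g_sigma_k hCol hcyc, ih (by omega), hk_val (p i + r)]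
        have hpi : p i < n := hplt i
        have ht1 : ((p i + r) % n = p i) ↔ r = 0 := by
          rw [mod_window hpi (by omega)]
          split <;> omega
        have ht2 : ((p i + r) % n = mm) ↔ r = Δ := by
          have hform : Δ = if p i ≤ mm then mm - p i else mm + n - p i := by
            rw [hΔdef]; exact cd_form hpi hmmlt
          rw [mod_window hpi (by omega)]
          split_ifs at hform ⊢ <;> omega
        rw [show (if ((p i + r) % n = p i ∨ (p i + r) % n = mm) then (1:ZMod 2) else 0)
            = (if (r = 0 ∨ r = Δ) then (1:ZMod 2) else 0) from
          if_congr (by rw [ht1, ht2]) rfl rfl]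
        by_cases hr0 : r = 0
        · rw [if_neg (show ¬(1 ≤ r ∧ r ≤ Δ) by omega), if_pos (Or.inl hr0),
            if_pos (show 1 ≤ r + 1 ∧ r + 1 ≤ Δ by omega), add_zero]
        · by_cases hrΔ : r = Δ
          · rw [if_pos (show 1 ≤ r ∧ r ≤ Δ by omega), if_pos (Or.inr hrΔ),
              if_neg (show ¬(1 ≤ r + 1 ∧ r + 1 ≤ Δ) by omega), z2_flip2]
          · rw [if_neg (show ¬(r = 0 ∨ r = Δ) by tauto), add_zero,
              if_congr (show (1 ≤ r ∧ r ≤ Δ) ↔ (1 ≤ r + 1 ∧ r + 1 ≤ Δ) by omega) rfl rfl]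
  have hinn_g : gfun Col i x (M.θ (ecy Col i x t)) = gfun Col i x E1 + 1 := by
    have hexp : (⇑M.σ)^[p i + Δ] b = M.θ (ecy Col i x t) := by
      have hmodeq : (p i + Δ) % n = mm := by
        rw [hΔdef]; exact cd_add_exp (hplt i) hmmlt
      rw [← hitermod (p i + Δ), hmodeq, hmm]
    rw [← hexp, hsector Δ hΔlt, if_pos ⟨hΔpos, le_refl Δ⟩]
  constructor
  · -- g is constant along the cycle
    have h1 : gfun Col i x (M.θ (ecy Col i x t))
        = gfun Col i x (ecy Col i x t) + kInd Col i x (eqc M (ecy Col i x t)) :=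
      g_theta_k hCol hcyc _
    rw [kInd, if_pos ⟨t, rfl⟩] at h1
    rw [h1] at hinn_g
    exact (z2_add_right_cancel _ _ hinn_g.symm)
  · intro w hw j hjw
    have hwpos : w = (⇑M.σ)^[p j] b := hout j w hw hjw
    have horder := order_cases hd i p hmono
    obtain ⟨hF1, hF2⟩ := cyc_arith (hplt i) (hplt (i+1)) (hplt (i-1)) hmmlt horder
      hbetween.1 hbetween.2
    constructor
    · rintro rfl
      by_cases hq0 : p (i+1) = p i
      · left; rw [hwpos, hq0, ← he1]
      · right
        set q : ℕ := cycDist n (p i) (p (i+1)) with hqdef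
        have hqpos : 0 < q := by
          rcases Nat.eq_zero_or_pos q with h | h
          · exact absurd ((cd_eq_zero_iff (hplt i) (hplt (i+1))).mp h)
              (fun hh => hq0 hh.symm)
          · exact h
        have hqΔ : q ≤ Δ := hF1
        have hwq : w = (⇑M.σ)^[p i + q] b := by
          have hmodeq : (p i + q) % n = p (i+1) := by
            rw [hqdef]; exact cd_add_exp (hplt i) (hplt (i+1))
          rw [hwpos, ← hmodeq, hitermod]
        have hgw : gfun Col i x w = gfun Col i x E1 + 1 := by
          rw [hwq, hsector q (lt_of_le_of_lt hqΔ hΔlt), if_pos ⟨hqpos, hqΔ⟩]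
        have hwne1 : w ≠ E1 := by
          intro h
          exact hq0 (hiterinj _ _ (hplt (i+1)) (hplt i) (by rw [← hwpos, h, he1]))
        have hwne2 : w ≠ M.θ (ecy Col i x t) := by
          intro h
          have : p (i+1) = mm := hiterinj _ _ (hplt (i+1)) hmmlt (by rw [← hwpos, h, ← hmm])
          rw [← this] at hbetween
          have := hbetween.1
          rw [show cycDist n (p (i+1)) (p (i+1)) = 0 from
            (cd_eq_zero_iff (hplt (i+1)) (hplt (i+1))).mpr rfl] at this
          omega
        have hnEC : eqc M w ∉ ECset Col i x := by
          intro hmem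
          rcases (incidence hCol hcyc t w hw).mp hmem with h | h
          · exact hwne1 h
          · exact hwne2 h
        refine ⟨hnEC, hgw, ?_⟩
        rw [g_theta_k hCol hcyc, kInd, if_neg hnEC, add_zero, hgw]
    · rintro rfl
      by_cases hq0 : p (i-1) = p i
      · left; rw [hwpos, hq0, ← he1]
      · right
        set q : ℕ := cycDist n (p i) (p (i-1)) with hqdef
        have hqpos : 0 < q := by
          rcases Nat.eq_zero_or_pos q with h | h
          · exact absurd ((cd_eq_zero_iff (hplt i) (hplt (i-1))).mp h)
              (fun hh => hq0 hh.symm)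
          · exact h
        have hqΔ : Δ < q := by
          rcases hF2 with h | h
          · omega
          · exact h
        have hwq : w = (⇑M.σ)^[p i + q] b := by
          have hmodeq : (p i + q) % n = p (i-1) := by
            rw [hqdef]; exact cd_add_exp (hplt i) (hplt (i-1))
          rw [hwpos, ← hmodeq, hitermod]
        have hgw : gfun Col i x w = gfun Col i x E1 := by
          rw [hwq, hsector q (cd_lt hnpos), if_neg (by omega), add_zero]
        have hwne1 : w ≠ E1 := by
          intro h
          exact hq0 (hiterinj _ _ (hplt (i-1)) (hplt i) (by rw [← hwpos, h, he1]))
        have hwne2 : w ≠ M.θ (ecy Col i x t) := by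
          intro h
          have : p (i-1) = mm := hiterinj _ _ (hplt (i-1)) hmmlt (by rw [← hwpos, h, ← hmm])
          rw [← this] at hbetween
          exact absurd hbetween.2 (lt_irrefl _)
        have hnEC : eqc M w ∉ ECset Col i x := by
          intro hmem
          rcases (incidence hCol hcyc t w hw).mp hmem with h | h
          · exact hwne1 h
          · exact hwne2 h
        refine ⟨hnEC, hgw, ?_⟩
        rw [g_theta_k hCol hcyc, kInd, if_neg hnEC, add_zero, hgw]

omit hCol hcyc hd in
lemma z2_ne_zero : ∀ a : ZMod 2, a ≠ 0 → a = 1 := by decide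

omit hCol hcyc hd in
lemma z2_eq_of_one_iff : ∀ a b : ZMod 2, (a = 1 ↔ b = 1) → a = b := by decide

lemma g_cycle_const (t : ℕ) : gfun Col i x (ecy Col i x t) = gfun Col i x x := by
  induction t with
  | zero => rfl
  | succ t ih => rw [(vertex_main hCol hcyc hd t).1, ih]

omit hd in
lemma kInd_one_iff (c : EQ M) : kInd Col i x c = 1 ↔ c ∈ ECset Col i x := by
  rw [kInd]
  split <;> simp_all

omit hd in
lemma kInd_zero_iff (c : EQ M) : kInd Col i x c = 0 ↔ c ∉ ECset Col i x := by
  rw [kInd]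
  split <;> simp_all

lemma at_vertex_W (t : ℕ) (w : M.D) (hw : vq M w = vq M (ecy Col i x (t+1)))
    (hjw : jcol Col i x ∈ Col w) :
    eqc M w ∈ ECset Col i x ∨ (gfun Col i x w = 1 ∧ gfun Col i x (M.θ w) = 1) := by
  have hmain := ((vertex_main hCol hcyc hd t).2 w hw _ hjw)
  by_cases h0 : gfun Col i x x = 0
  · have hj : jcol Col i x = i + 1 := by rw [jcol, if_pos h0]
    rcases hmain.1 hj with h | ⟨hne, hgw, hgtw⟩
    · exact Or.inl (h ▸ ⟨t+1, rfl⟩)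
    · refine Or.inr ⟨?_, ?_⟩
      · rw [hgw, g_cycle_const hCol hcyc hd, h0, zero_add]
      · rw [hgtw, g_cycle_const hCol hcyc hd, h0, zero_add]
  · have h1 : gfun Col i x x = 1 := z2_ne_zero _ h0
    have hj : jcol Col i x = i - 1 := by rw [jcol, if_neg h0]
    rcases hmain.2 hj with h | ⟨hne, hgw, hgtw⟩
    · exact Or.inl (h ▸ ⟨t+1, rfl⟩)
    · refine Or.inr ⟨?_, ?_⟩
      · rw [hgw, g_cycle_const hCol hcyc hd, h1]
      · rw [hgtw, g_cycle_const hCol hcyc hd, h1]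

lemma W_head_int (w : M.D)
    (hW : eqc M w ∈ ECset Col i x ∨ (gfun Col i x w = 1 ∧ gfun Col i x (M.θ w) = 1)) :
    ¬ M.ExtVert (M.θ w) := by
  rcases hW with ⟨r, hr⟩ | ⟨_, hgtw⟩
  · rcases eqc_eq_iff.mp hr with h | h
    · rw [h]
      exact ecy_head_int hCol hcyc r
    · rw [h, theta_theta]
      exact ecy_not_ext hCol hcyc r
  · intro hext
    rw [g_ext_zero hCol hcyc hd hext] at hgtw
    exact absurd hgtw (by decide)

lemma W_step (w : M.D)
    (hjw : jcol Col i x ∈ Col w)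
    (hW : eqc M w ∈ ECset Col i x ∨ (gfun Col i x w = 1 ∧ gfun Col i x (M.θ w) = 1)) :
    jcol Col i x ∈ Col (nxt Col (jcol Col i x) w) ∧
      (eqc M (nxt Col (jcol Col i x) w) ∈ ECset Col i x ∨
        (gfun Col i x (nxt Col (jcol Col i x) w) = 1
          ∧ gfun Col i x (M.θ (nxt Col (jcol Col i x) w)) = 1)) := by
  have hint := W_head_int hCol hcyc hd w hW
  obtain ⟨hsc', hcol'⟩ := nxt_spec hCol (jcol Col i x) w hint
  refine ⟨hcol', ?_⟩
  by_cases hcv : ∃ r, vq M (nxt Col (jcol Col i x) w) = vq M (ecy Col i x r)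
  · obtain ⟨r, hr⟩ := hcv
    rw [cycle_vertex_shift hCol hcyc r] at hr
    exact at_vertex_W hCol hcyc hd _ _ hr hcol'
  · have hzvq : vq M (M.θ w) = vq M (nxt Col (jcol Col i x) w) := vq_eq_iff.mpr hsc'
    have hgtw : gfun Col i x (M.θ w) = 1 := by
      rcases hW with ⟨r, hr⟩ | ⟨_, h⟩
      · exfalso
        rcases eqc_eq_iff.mp hr with h | h
        · refine hcv ⟨r + 1, ?_⟩
          rw [← hzvq, h]
          exact vq_eq_iff.mpr (ecy_step hCol hcyc r)
        · refine hcv ⟨r, ?_⟩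
          rw [← hzvq, h, theta_theta]
      · exact h
    have hnoEC : ∀ w', vq M w' = vq M (nxt Col (jcol Col i x) w)
        → kInd Col i x (eqc M w') = 0 :=
      fun w' hw' => not_cycle_vertex_no_EC hCol hcyc hcv hw'
    have hgz : gfun Col i x (nxt Col (jcol Col i x) w) = 1 := by
      rw [← g_const_vertex hCol hcyc hzvq hnoEC]
      exact hgtw
    refine Or.inr ⟨hgz, ?_⟩
    rw [g_theta_k hCol hcyc, hnoEC _ rfl, add_zero]
    exact hgz

lemma exists_W_cycle :
    ∃ x', IsCyc Col (jcol Col i x) x' ∧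
      ∀ t, jcol Col i x ∈ Col (ecy Col (jcol Col i x) x' t) ∧
        (eqc M (ecy Col (jcol Col i x) x' t) ∈ ECset Col i x ∨
          (gfun Col i x (ecy Col (jcol Col i x) x' t) = 1
            ∧ gfun Col i x (M.θ (ecy Col (jcol Col i x) x' t)) = 1)) := by
  set j := jcol Col i x with hj
  set x0 := nxt Col j (ecy Col i x 0) with hx0
  have hx0W : j ∈ Col x0 ∧ (eqc M x0 ∈ ECset Col i x ∨
      (gfun Col i x x0 = 1 ∧ gfun Col i x (M.θ x0) = 1)) := by
    obtain ⟨hsc0, hcol0⟩ := nxt_spec hCol j (ecy Col i x 0) (ecy_head_int hCol hcyc 0)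
    have hvq0 : vq M x0 = vq M (ecy Col i x (0+1)) :=
      (vq_eq_iff.mpr hsc0).symm.trans (vq_eq_iff.mpr (ecy_step hCol hcyc 0))
    exact ⟨hcol0, at_vertex_W hCol hcyc hd 0 x0 hvq0 hcol0⟩
  set y : ℕ → M.D := fun u => (nxt Col j)^[u] x0 with hy
  have hWy : ∀ u, j ∈ Col (y u) ∧ (eqc M (y u) ∈ ECset Col i x ∨
      (gfun Col i x (y u) = 1 ∧ gfun Col i x (M.θ (y u)) = 1)) := by
    intro u
    induction u with
    | zero => exact hx0W
    | succ u ih =>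
        have : y (u+1) = nxt Col j (y u) := Function.iterate_succ_apply' _ _ _
        rw [this]
        exact W_step hCol hcyc hd (y u) ih.1 ih.2
  have main : ∀ u u' : ℕ, u < u' → y u = y u' →
      ∃ x', IsCyc Col j x' ∧
        ∀ t, j ∈ Col (ecy Col j x' t) ∧
          (eqc M (ecy Col j x' t) ∈ ECset Col i x ∨
            (gfun Col i x (ecy Col j x' t) = 1
              ∧ gfun Col i x (M.θ (ecy Col j x' t)) = 1)) := by
    intro u u' hlt heq
    have hiter : ∀ t, ecy Col j (y u) t = y (t + u) := by
      intro t
      show (nxt Col j)^[t] ((nxt Col j)^[u] x0) = (nxt Col j)^[t + u] x0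
      rw [Function.iterate_add_apply]
    refine ⟨y u, ⟨⟨u' - u, by omega, ?_⟩, ?_⟩, ?_⟩
    · show (nxt Col j)^[u' - u] (y u) = y u
      have := hiter (u' - u)
      rw [show (u' - u) + u = u' by omega] at this
      rw [show (nxt Col j)^[u' - u] (y u) = ecy Col j (y u) (u' - u) from rfl, this, ← heq]
    · intro t
      rw [hiter t]
      exact ⟨(hWy (t + u)).1, W_head_int hCol hcyc hd _ (hWy (t + u)).2⟩
    · intro t
      rw [hiter t]
      exact hWy (t + u)
  obtain ⟨u, u', hne, heq⟩ := Finite.exists_ne_map_eq_of_infinite y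
  rcases Ne.lt_or_gt hne with hlt | hlt
  · exact main u u' hlt heq
  · exact main u' u hlt heq.symm

set_option maxHeartbeats 1000000 in
lemma descent_key (x' : M.D) (hcyc' : IsCyc Col (jcol Col i x) x')
    (hW : ∀ t, eqc M (ecy Col (jcol Col i x) x' t) ∈ ECset Col i x ∨
      (gfun Col i x (ecy Col (jcol Col i x) x' t) = 1
        ∧ gfun Col i x (M.θ (ecy Col (jcol Col i x) x' t)) = 1))
    (hle : meas Col i x ≤ meas Col (jcol Col i x) x') :
    ∀ t, jcol Col i x ∈ Col (ecy Col i x t) := by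
  have hSle : ∀ f, Spot Col (jcol Col i x) x' f = 1 → Spot Col i x f = 1 := by
    intro f0 hf0
    by_contra hSf0'
    have hSf0 : Spot Col i x f0 = 0 := by
      rcases (show ∀ a : ZMod 2, a = 0 ∨ a = 1 by decide) (Spot Col i x f0) with h | h
      · exact h
      · exact absurd h hSf0'
    set R : Set (FQ M) := {f | Relation.ReflTransGen
      (fun f f' => ∃ a : M.D, eqc M a ∉ ECset Col i x ∧ fq M a = f ∧ fq M (M.θ a) = f')
      f0 f} with hRdef
    have hf0R : f0 ∈ R := Relation.ReflTransGen.refl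
    have hRconst : ∀ f, f ∈ R →
        Spot Col i x f = 0 ∧ Spot Col (jcol Col i x) x' f = 1 := by
      intro f hf
      induction hf with
      | refl => exact ⟨hSf0, hf0⟩
      | tail hrt hstepp ih =>
          obtain ⟨a, hnEC, rfl, rfl⟩ := hstepp
          have hS : Spot Col i x (fq M (M.θ a)) = Spot Col i x (fq M a) := by
            have h2 := g_theta_k hCol hcyc a
            rw [show kInd Col i x (eqc M a) = 0 from (kInd_zero_iff hCol hcyc _).mpr hnEC,
              add_zero] at h2
            exact h2
          have hk' : kInd Col (jcol Col i x) x' (eqc M a) = 0 := by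
            rw [kInd_zero_iff hCol hcyc']
            rintro ⟨r, hr⟩
            rcases eqc_eq_iff.mp hr.symm with h | h
            · rcases hW r with hEC | ⟨hg1, _⟩
              · rw [h] at hEC; exact hnEC hEC
              · rw [h] at hg1
                rw [show gfun Col i x a = Spot Col i x (fq M a) from rfl, ih.1] at hg1
                exact absurd hg1 (by decide)
            · rcases hW r with hEC | ⟨hg1, _⟩
              · rw [h, eqc_theta] at hEC; exact hnEC hEC
              · rw [h] at hg1
                rw [show gfun Col i x (M.θ a) = Spot Col i x (fq M (M.θ a)) from rfl,
                  hS, ih.1] at hg1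
                exact absurd hg1 (by decide)
          have hS' : Spot Col (jcol Col i x) x' (fq M (M.θ a))
              = Spot Col (jcol Col i x) x' (fq M a) := by
            have h2 := g_theta_k hCol hcyc' a
            rw [hk', add_zero] at h2
            exact h2
          exact ⟨by rw [hS, ih.1], by rw [hS', ih.2]⟩
    set χR : FQ M → ZMod 2 := fun f => if f ∈ R then 1 else 0 with hχdef
    have hmemiff : ∀ a : M.D, eqc M a ∉ ECset Col i x →
        (fq M a ∈ R ↔ fq M (M.θ a) ∈ R) := by
      intro a hnEC
      constructor
      · intro h; exact h.tail ⟨a, hnEC, rfl, rfl⟩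
      · intro h
        refine h.tail ⟨M.θ a, ?_, rfl, ?_⟩
        · rw [eqc_theta]; exact hnEC
        · rw [theta_theta]
    have hsupp : ∀ a : M.D, eqc M a ∉ ECset Col i x → bmap M χR (eqc M a) = 0 := by
      intro a hnEC
      rw [bmap_eqc]
      simp only [hχdef]
      by_cases hm : fq M a ∈ R
      · rw [if_pos hm, if_pos ((hmemiff a hnEC).mp hm)]
        exact z2_oneone
      · rw [if_neg hm, if_neg (fun h => hm ((hmemiff a hnEC).mpr h)), add_zero]
    have hwconst : ∀ t, bmap M χR (eqc M (ecy Col i x t))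
        = bmap M χR (eqc M (ecy Col i x 0)) := by
      intro t
      induction t with
      | zero => rfl
      | succ t ih =>
          have hsum := dmap_bmap χR (vq M (ecy Col i x (t+1)))
          rw [dmap] at hsum
          rw [sum_eq_pair (x := ecy Col i x (t+1)) (y := M.θ (ecy Col i x t))
              (Ne.symm (fun h => ecy_ne_theta hCol hcyc (t+1) t h.symm))
              (by simp only [Finset.mem_filter, Finset.mem_univ, true_and])
              (by simp only [Finset.mem_filter, Finset.mem_univ, true_and]
                  exact vq_eq_iff.mpr (ecy_step hCol hcyc t))
              ?_] at hsum
          · rw [eqc_theta] at hsum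
            rw [(z2_add_eq_zero_iff _ _).mp hsum, ih]
          · intro a ha h1 h2
            simp only [Finset.mem_filter, Finset.mem_univ, true_and] at ha
            apply hsupp
            intro hmem
            rcases (incidence hCol hcyc t a ha).mp hmem with h | h
            · exact h1 h
            · exact h2 h
    have hfoR : fq M (M.outer 0) ∈ R := by
      rcases (show ∀ a : ZMod 2, a = 0 ∨ a = 1 by decide)
        (bmap M χR (eqc M (ecy Col i x 0))) with h0c | h1c
      · have hker : blin M χR = 0 := by
          funext c
          obtain ⟨a, rfl⟩ := eqc_surj c
          rw [blin_apply, Pi.zero_apply]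
          by_cases hmem : eqc M a ∈ ECset Col i x
          · obtain ⟨r, hr⟩ := hmem
            rw [hr, hwconst r, h0c]
          · exact hsupp a hmem
        obtain ⟨a1, ha1⟩ := fq_surj f0
        have hconst := ker_blin_const hker a1 (M.outer 0)
        rw [ha1] at hconst
        have hh : χR f0 = 1 := by simp only [hχdef]; rw [if_pos hf0R]
        rw [hh] at hconst
        by_contra hno
        rw [show χR (fq M (M.outer 0)) = 0 by
          simp only [hχdef]; rw [if_neg hno]] at hconst
        exact absurd hconst (by decide)
      · have hker : blin M (χR + Spot Col i x) = 0 := by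
          rw [map_add]
          funext c
          obtain ⟨a, rfl⟩ := eqc_surj c
          rw [Pi.add_apply, Pi.zero_apply]
          have hval : blin M χR (eqc M a) = kInd Col i x (eqc M a) := by
            by_cases hmem : eqc M a ∈ ECset Col i x
            · obtain ⟨r, hr⟩ := id hmem
              rw [blin_apply, hr, hwconst r, h1c]
              exact ((kInd_one_iff hCol hcyc _).mpr ⟨r, rfl⟩).symm
            · rw [blin_apply, hsupp a hmem, (kInd_zero_iff hCol hcyc _).mpr hmem]
          rw [hval, congrFun (spot_spec hCol hcyc).1 (eqc M a)]
          exact CharTwo.add_self_eq_zero _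
        obtain ⟨a1, ha1⟩ := fq_surj f0
        have hconst := ker_blin_const hker a1 (M.outer 0)
        rw [ha1] at hconst
        simp only [Pi.add_apply] at hconst
        rw [hSf0, (spot_spec hCol hcyc).2, add_zero, add_zero] at hconst
        have hh : χR f0 = 1 := by simp only [hχdef]; rw [if_pos hf0R]
        rw [hh] at hconst
        by_contra hno
        rw [show χR (fq M (M.outer 0)) = 0 by
          simp only [hχdef]; rw [if_neg hno]] at hconst
        exact absurd hconst (by decide)
    have hbad := (hRconst _ hfoR).2
    rw [(spot_spec hCol hcyc').2] at hbad
    exact absurd hbad (by decide)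
  -- equality of the two potentials
  have hsub : Finset.univ.filter (fun f => Spot Col (jcol Col i x) x' f = 1)
      ⊆ Finset.univ.filter (fun f => Spot Col i x f = 1) := by
    intro f hf
    simp only [Finset.mem_filter, Finset.mem_univ, true_and] at hf ⊢
    exact hSle f hf
  have hseteq := Finset.eq_of_subset_of_card_le hsub hle
  have hSS : Spot Col (jcol Col i x) x' = Spot Col i x := by
    funext f
    apply z2_eq_of_one_iff
    constructor
    · intro h; exact hSle f h
    · intro h
      have hmem : f ∈ Finset.univ.filter (fun f => Spot Col (jcol Col i x) x' f = 1) := by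
        rw [hseteq]
        simp only [Finset.mem_filter, Finset.mem_univ, true_and]
        exact h
      simp only [Finset.mem_filter, Finset.mem_univ, true_and] at hmem
      exact hmem
  have hkk : kInd Col (jcol Col i x) x' = kInd Col i x := by
    rw [← (spot_spec hCol hcyc').1, ← (spot_spec hCol hcyc).1, hSS]
  have hECeq : ∀ c, c ∈ ECset Col (jcol Col i x) x' ↔ c ∈ ECset Col i x := by
    intro c
    rw [← kInd_one_iff hCol hcyc', ← kInd_one_iff hCol hcyc, hkk]
  have hmaint : ∀ t, jcol Col i x ∈ Col (ecy Col i x (t+1)) := by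
    intro t
    obtain ⟨r, hr⟩ := (hECeq (eqc M (ecy Col i x (t+1)))).mpr ⟨t+1, rfl⟩
    rcases eqc_eq_iff.mp hr.symm with h | h
    · rw [← h]
      exact ecy_col hCol hcyc' r
    · exfalso
      have hvq' : vq M (ecy Col (jcol Col i x) x' r) = vq M (ecy Col i x (t+1+1)) := by
        rw [h]
        exact vq_eq_iff.mpr (ecy_step hCol hcyc (t+1))
      have hcol' : jcol Col i x ∈ Col (ecy Col (jcol Col i x) x' r) := ecy_col hCol hcyc' r
      have hmain := (vertex_main hCol hcyc hd (t+1)).2 _ hvq' _ hcol'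
      by_cases h0 : gfun Col i x x = 0
      · have hj : jcol Col i x = i + 1 := by rw [jcol, if_pos h0]
        rcases hmain.1 hj with hcase | ⟨hne, _, _⟩
        · rw [h] at hcase
          exact ecy_ne_theta hCol hcyc (t+1+1) (t+1) hcase.symm
        · apply hne
          rw [h, eqc_theta]
          exact ⟨t+1, rfl⟩
      · have hj : jcol Col i x = i - 1 := by rw [jcol, if_neg h0]
        rcases hmain.2 hj with hcase | ⟨hne, _, _⟩
        · rw [h] at hcase
          exact ecy_ne_theta hCol hcyc (t+1+1) (t+1) hcase.symm
        · apply hne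
          rw [h, eqc_theta]
          exact ⟨t+1, rfl⟩
  intro t
  rw [cycle_vertex_shift hCol hcyc t]
  exact hmaint _

omit hd in
lemma IsCyc_next (hall : ∀ t, jcol Col i x ∈ Col (ecy Col i x t)) :
    IsCyc Col (jcol Col i x) x ∧ ∀ t, ecy Col (jcol Col i x) x t = ecy Col i x t := by
  have hiter : ∀ t, ecy Col (jcol Col i x) x t = ecy Col i x t := by
    intro t
    induction t with
    | zero => rfl
    | succ t ih =>
        show (nxt Col (jcol Col i x))^[t+1] x = ecy Col i x (t+1)
        rw [Function.iterate_succ_apply',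
          show (nxt Col (jcol Col i x))^[t] x = ecy Col i x t from ih]
        exact (eq_nxt hCol (ecy_step hCol hcyc t) (hall (t+1))).symm
  refine ⟨⟨⟨Function.minimalPeriod (nxt Col i) x, mper_pos hCol hcyc, ?_⟩, ?_⟩, hiter⟩
  · show ecy Col (jcol Col i x) x _ = x
    rw [hiter]
    have h2 := ecy_add_period hCol hcyc 0
    rw [Nat.zero_add] at h2
    exact h2
  · intro t
    rw [hiter t]
    exact ⟨hall t, ecy_head_int hCol hcyc t⟩

omit hcyc hd in
lemma meas_congr {i' : ZMod d} {x2 : M.D} (h : ∀ t, ecy Col i' x2 t = ecy Col i x t) :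
    Spot Col i' x2 = Spot Col i x ∧ meas Col i' x2 = meas Col i x := by
  have hEC : ECset Col i' x2 = ECset Col i x := by
    ext c
    constructor
    · rintro ⟨t, ht⟩; exact ⟨t, by rw [ht, h t]⟩
    · rintro ⟨t, ht⟩; exact ⟨t, by rw [ht, h t]⟩
  have hk : kInd Col i' x2 = kInd Col i x := by
    funext c; rw [kInd, kInd, hEC]
  have hS : Spot Col i' x2 = Spot Col i x := by
    unfold Spot
    rw [hk]
  exact ⟨hS, by unfold meas; rw [hS]⟩

end CycCtx

lemma no_cycle (hd : 3 ≤ d) (hCol : M.IsSchnyderData Col) :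
    ∀ (i : ZMod d) (x : M.D), ¬ IsCyc Col i x := by
  intro i0 x0 hcyc0
  set MS : Set ℕ := {n | ∃ (i : ZMod d) (x : M.D), IsCyc Col i x ∧ meas Col i x = n} with hMS
  have hne : MS.Nonempty := ⟨meas Col i0 x0, i0, x0, hcyc0, rfl⟩
  obtain ⟨i, x, hcyc, hmeq⟩ := Nat.sInf_mem hne
  have hmin : ∀ (i' : ZMod d) (x' : M.D), IsCyc Col i' x' → meas Col i x ≤ meas Col i' x' := by
    intro i' x' h
    rw [hmeq]
    exact Nat.sInf_le ⟨i', x', h, rfl⟩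
  haveI : NeZero d := ⟨by omega⟩
  set cr : ℕ → ZMod d := fun r => if gfun Col i x x = 0 then i + r else i - r with hcr
  have hstep : ∀ r : ℕ, (IsCyc Col (cr r) x ∧ ∀ t, ecy Col (cr r) x t = ecy Col i x t) →
      (IsCyc Col (cr (r+1)) x ∧ ∀ t, ecy Col (cr (r+1)) x t = ecy Col i x t) := by
    rintro r ⟨hcycr, hecyr⟩
    have hmeas_r : meas Col (cr r) x = meas Col i x := (meas_congr hCol hecyr).2
    obtain ⟨x', hcyc', hWall⟩ := exists_W_cycle hCol hcycr hd
    have hle : meas Col (cr r) x ≤ meas Col (jcol Col (cr r) x) x' := by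
      rw [hmeas_r]
      exact hmin _ _ hcyc'
    have hall := descent_key hCol hcycr hd x' hcyc' (fun t => (hWall t).2) hle
    obtain ⟨hcycnext, hecynext⟩ := IsCyc_next hCol hcycr hall
    have hgf : gfun Col (cr r) x x = gfun Col i x x := by
      show Spot Col (cr r) x (fq M x) = Spot Col i x (fq M x)
      rw [(meas_congr hCol hecyr).1]
    have hjj : jcol Col (cr r) x = cr (r+1) := by
      rw [jcol, hgf, hcr]
      by_cases h0 : gfun Col i x x = 0
      · simp only [if_pos h0]
        push_cast
        ring
      · simp only [if_neg h0]
        push_cast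
        ring
    rw [hjj] at hcycnext hecynext
    exact ⟨hcycnext, fun t => (hecynext t).trans (hecyr t)⟩
  have hPall : ∀ r, IsCyc Col (cr r) x ∧ ∀ t, ecy Col (cr r) x t = ecy Col i x t := by
    intro r
    induction r with
    | zero =>
        have h0 : cr 0 = i := by rw [hcr]; split <;> simp
        rw [h0]
        exact ⟨hcyc, fun t => rfl⟩
    | succ r ih => exact hstep r ih
  have hcolx : ∀ r, cr r ∈ Col x := fun r => ((hPall r).1.2 0).1
  have hinj : Set.InjOn cr ↑(Finset.range (d-1)) := by
    intro r hr r' hr' heq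
    simp only [Finset.coe_range, Set.mem_Iio] at hr hr'
    rw [hcr] at heq
    by_cases h0 : gfun Col i x x = 0
    · simp only [if_pos h0] at heq
      have h2 : (r : ZMod d) = r' := add_left_cancel heq
      have h3 := congrArg ZMod.val h2
      rwa [ZMod.val_cast_of_lt (by omega), ZMod.val_cast_of_lt (by omega)] at h3
    · simp only [if_neg h0] at heq
      have h2 : (r : ZMod d) = r' := sub_right_inj.mp heq
      have h3 := congrArg ZMod.val h2
      rwa [ZMod.val_cast_of_lt (by omega), ZMod.val_cast_of_lt (by omega)] at h3
  have himg : Finset.image (fun r => cr r) (Finset.range (d-1)) ⊆ Col x := by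
    intro c hc
    obtain ⟨r, _, rfl⟩ := Finset.mem_image.mp hc
    exact hcolx r
  have hcard2 : (Finset.image (fun r => cr r) (Finset.range (d-1))).card = d - 1 := by
    rw [Finset.card_image_of_injOn hinj, Finset.card_range]
  have hcardle : d - 1 ≤ (Col x).card := by
    rw [← hcard2]
    exact Finset.card_le_card himg
  have hnotext : ¬ M.ExtEdge x := by
    intro h
    have hemp := hCol.ext_edge x h
    have hcx : i ∈ Col x := (hcyc.2 0).1
    rw [hemp] at hcx
    exact absurd hcx (Finset.notMem_empty _)
  have hec := hCol.edge_count x hnotext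
  omega

lemma isCyc_of_mono (hCol : M.IsSchnyderData Col) {i : ZMod d}
    (h : M.HasMonochromaticCycle Col i) : ∃ x, IsCyc Col i x := by
  obtain ⟨n, c, hcol, hstep⟩ := h
  have hnext : ∀ k : ZMod (n+1), c (k+1) = nxt Col i (c k) :=
    fun k => eq_nxt hCol (hstep k) (hcol (k+1))
  have hhead : ∀ k : ZMod (n+1), ¬ M.ExtVert (M.θ (c k)) := by
    intro k hext
    exact not_extVert_of_mem hCol (hcol (k+1))
      ((extVert_congr (vq_eq_iff.mpr (hstep k))).mp hext)
  have hiter : ∀ r : ℕ, (nxt Col i)^[r] (c 0) = c (r : ZMod (n+1)) := by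
    intro r
    induction r with
    | zero => simp
    | succ r ih =>
        rw [Function.iterate_succ_apply', ih, ← hnext]
        congr 1
        push_cast
        ring
  refine ⟨c 0, ⟨⟨n+1, by omega, ?_⟩, ?_⟩⟩
  · rw [hiter (n+1)]
    rw [show ((n+1 : ℕ) : ZMod (n+1)) = 0 from ZMod.natCast_self _]
  · intro t
    rw [show ecy Col i (c 0) t = (nxt Col i)^[t] (c 0) from rfl, hiter t]
    exact ⟨hcol _, hhead _⟩

lemma reaches_ext (hd : 3 ≤ d) (hCol : M.IsSchnyderData Col) {i : ZMod d} {a : M.D}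
    (ha : i ∈ Col a) :
    ∃ N : ℕ, (∀ u ≤ N, i ∈ Col ((nxt Col i)^[u] a))
      ∧ (∀ u < N, ¬ M.ExtVert (M.θ ((nxt Col i)^[u] a)))
      ∧ M.ExtVert (M.θ ((nxt Col i)^[N] a)) := by
  by_contra hno
  push_neg at hno
  set y : ℕ → M.D := fun u => (nxt Col i)^[u] a with hy
  have hgood : ∀ u, ∀ u' ≤ u, i ∈ Col (y u') ∧ ¬ M.ExtVert (M.θ (y u')) := by
    intro u
    induction u with
    | zero =>
        intro u' hu'
        rw [Nat.le_zero] at hu'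
        subst hu'
        refine ⟨ha, ?_⟩
        exact hno 0 (fun u hu => by rw [Nat.le_zero] at hu; subst hu; exact ha)
          (fun u hu => absurd hu (Nat.not_lt_zero u))
    | succ u ih =>
        have hcolnext : i ∈ Col (y (u+1)) := by
          have hs : y (u+1) = nxt Col i (y u) := Function.iterate_succ_apply' _ _ _
          rw [hs]
          exact (nxt_spec hCol i (y u) (ih u le_rfl).2).2
        have hnotext : ¬ M.ExtVert (M.θ (y (u+1))) := by
          apply hno (u+1)
          · intro u' hu'
            rcases Nat.lt_or_ge u' (u+1) with h | h
            · exact (ih u' (by omega)).1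
            · rw [show u' = u + 1 by omega]
              exact hcolnext
          · intro u' hu'
            exact (ih u' (by omega)).2
        intro u' hu'
        rcases Nat.lt_or_ge u' (u+1) with h | h
        · exact ih u' (by omega)
        · rw [show u' = u + 1 by omega]
          exact ⟨hcolnext, hnotext⟩
  obtain ⟨u, u', hne, heq⟩ := Finite.exists_ne_map_eq_of_infinite y
  have main : ∀ u u' : ℕ, u < u' → y u = y u' → False := by
    intro u u' hlt heq
    have hiter : ∀ t, ecy Col i (y u) t = y (t + u) := by
      intro t
      show (nxt Col i)^[t] ((nxt Col i)^[u] a) = (nxt Col i)^[t + u] a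
      rw [Function.iterate_add_apply]
    have hcyc : IsCyc Col i (y u) := by
      refine ⟨⟨u' - u, by omega, ?_⟩, ?_⟩
      · show ecy Col i (y u) (u' - u) = y u
        rw [hiter (u' - u), show (u' - u) + u = u' by omega, ← heq]
      · intro t
        rw [hiter t]
        exact hgood (t + u) (t + u) le_rfl
    exact no_cycle hd hCol i (y u) hcyc
  rcases Ne.lt_or_gt hne with hlt | hlt
  · exact main u u' hlt heq
  · exact main u' u hlt heq.symm

end Schnyder
end SchnyderAux


/-- In a Schnyder decomposition of a `d`-angulation of girth `d` (given by
its defining local conditions), no colored subgraph `Fᵢ` contains a directed cycle;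
equivalently, every monochromatic directed path starting at an internal vertex can be
prolonged to a directed path reaching an external vertex. -/
theorem stmt11 (d : ℕ) (hd : 3 ≤ d) (M : PlaneDAng d) (hg : M.HasGirth d)
    (Col : M.D → Finset (ZMod d)) (hCol : M.IsSchnyderData Col) :
    (∀ i : ZMod d, ¬ M.HasMonochromaticCycle Col i) ∧
    (∀ (i : ZMod d) (a : M.D), i ∈ Col a →
      ∃ (n : ℕ) (c : Fin (n + 1) → M.D), c 0 = a ∧ (∀ k, i ∈ Col (c k)) ∧
        (∀ k : Fin n, M.σ.SameCycle (M.θ (c k.castSucc)) (c k.succ)) ∧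
        M.ExtVert (M.θ (c (Fin.last n)))) := by
  constructor
  · intro i h
    obtain ⟨x, hcyc⟩ := SchnyderAux.isCyc_of_mono hCol h
    exact SchnyderAux.no_cycle hd hCol i x hcyc
  · intro i a ha
    obtain ⟨N, hcol, hnotext, hext⟩ := SchnyderAux.reaches_ext hd hCol ha
    refine ⟨N, fun k => (SchnyderAux.nxt Col i)^[k.val] a, ?_, ?_, ?_, ?_⟩
    · show (SchnyderAux.nxt Col i)^[(0 : Fin (N+1)).val] a = a
      rw [Fin.val_zero]
      rfl
    · intro k
      exact hcol k.val (Nat.lt_succ_iff.mp k.isLt)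
    · intro k
      have hs : (SchnyderAux.nxt Col i)^[(k.succ : Fin (N+1)).val] a
          = SchnyderAux.nxt Col i ((SchnyderAux.nxt Col i)^[(k.castSucc : Fin (N+1)).val] a) := by
        rw [Fin.val_succ, Fin.coe_castSucc, Function.iterate_succ_apply']
      show M.σ.SameCycle (M.θ ((SchnyderAux.nxt Col i)^[(k.castSucc : Fin (N+1)).val] a))
        ((SchnyderAux.nxt Col i)^[(k.succ : Fin (N+1)).val] a)
      rw [hs]
      exact (SchnyderAux.nxt_spec hCol i _ (by
        rw [Fin.coe_castSucc]
        exact hnotext k.val k.isLt)).1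
    · show M.ExtVert (M.θ ((SchnyderAux.nxt Col i)^[(Fin.last N).val] a))
      rw [Fin.val_last]
      exact hext
end
end

section
/- The complemented dual of a spanning tree of a connected plane graph G is a spanning tree of the dual graph G*: the edges of G* dual to the edges of G not in a spanning tree T of G form a spanning tree of G*. -/
open scoped Classical

noncomputable section

/-- A connected plane map, encoded as a rotation system on darts: `σ` is the clockwise rotation
around vertices and `θ` the dart reversal.  Vertices are the `σ`-cycles, edges the `θ`-cycles,
faces the `σ * θ`-cycles; planarity is the Euler relation `V + F = E + 2`. -/
structure PlaneMap where
  D : Type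
  [finD : Fintype D]
  [decD : DecidableEq D]
  σ : Equiv.Perm D
  θ : Equiv.Perm D
  θ_invol : Function.Involutive ⇑θ
  θ_ne : ∀ a, θ a ≠ a
  nonemptyD : Nonempty D
  connected : ∀ a b : D, Relation.ReflTransGen (fun x y => y = σ x ∨ y = θ x) a b
  euler : Nat.card (Quotient (sameCycleSetoid σ)) + Nat.card (Quotient (sameCycleSetoid (σ * θ)))
        = Nat.card (Quotient (sameCycleSetoid θ)) + 2

attribute [instance] PlaneMap.finD PlaneMap.decD

namespace PlaneMap

variable (M : PlaneMap)

/-- A simple cycle of length `ℓ` with respect to a "vertex" permutation `ρ` (take `ρ = M.σ` for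
cycles of the map itself, and `ρ = M.σ * M.θ` for cycles of the dual map): a cyclic sequence of
darts, consecutive ones sharing a `ρ`-vertex, with pairwise distinct vertices and edges. -/
def IsCycleIn (ρ : Equiv.Perm M.D) (ℓ : ℕ) (c : ZMod ℓ → M.D) : Prop :=
  0 < ℓ ∧ (∀ i, ρ.SameCycle (M.θ (c i)) (c (i + 1))) ∧
    (∀ i j, ρ.SameCycle (c i) (c j) → i = j) ∧
    (∀ i j, c i = c j ∨ c i = M.θ (c j) → i = j)

end PlaneMap

namespace PlaneMap

variable (M : PlaneMap)

/-- The subgraph given by the `θ`-closed dart set `S` is a spanning tree of the map: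
it connects all darts (hence all vertices, moving freely around vertices and along the edges
of `S`), and it contains no simple cycle. -/
def IsSpanningTree (S : Set M.D) : Prop :=
  (∀ a b : M.D, Relation.ReflTransGen (fun x y => y = M.σ x ∨ (x ∈ S ∧ y = M.θ x)) a b) ∧
  (∀ (ℓ : ℕ) (c : ZMod ℓ → M.D), M.IsCycleIn M.σ ℓ c → ∃ i, c i ∉ S)

/-- The subgraph given by the `θ`-closed dart set `S` is a spanning tree of the **dual** map
(whose vertices are the faces of `M`, i.e. the cycles of `σ * θ`, and whose edges are the duals
of the edges of `M`). -/
def IsDualSpanningTree (S : Set M.D) : Prop :=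
  (∀ a b : M.D,
      Relation.ReflTransGen (fun x y => y = (M.σ * M.θ) x ∨ (x ∈ S ∧ y = M.θ x)) a b) ∧
  (∀ (ℓ : ℕ) (c : ZMod ℓ → M.D), M.IsCycleIn (M.σ * M.θ) ℓ c → ∃ i, c i ∉ S)

end PlaneMap

namespace PlaneMap

variable (M : PlaneMap)

/-- auxiliary: reachability using rotations `ρ` and edges inside `X`. -/
def reach (ρ : Equiv.Perm M.D) (X : Set M.D) (a b : M.D) : Prop :=
  Relation.ReflTransGen (fun x y => y = ρ x ∨ (x ∈ X ∧ y = M.θ x)) a b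

/-- auxiliary: `θ`-closed sets. -/
def Closed (X : Set M.D) : Prop := ∀ a ∈ X, M.θ a ∈ X

variable {M}

theorem Closed.mem_iff {X : Set M.D} (hX : M.Closed X) {a : M.D} : M.θ a ∈ X ↔ a ∈ X :=
  ⟨fun h => by simpa [M.θ_invol a] using hX _ h, hX a⟩

theorem Closed.compl {X : Set M.D} (hX : M.Closed X) : M.Closed Xᶜ := fun a ha h => ha (by
  simpa [M.θ_invol a] using hX _ h)

theorem Closed.diff_pair {X : Set M.D} (hX : M.Closed X) (a : M.D) :
    M.Closed (X \ {a, M.θ a}) := by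
  rintro x ⟨hx, hx2⟩
  refine ⟨hX _ hx, ?_⟩
  simp only [Set.mem_insert_iff, Set.mem_singleton_iff] at hx2 ⊢
  push_neg at hx2 ⊢
  constructor
  · intro h; exact hx2.2 (by rw [← h, M.θ_invol])
  · intro h; exact hx2.1 (M.θ.injective h)

variable {ρ : Equiv.Perm M.D} {X : Set M.D}

theorem reach_refl (a : M.D) : M.reach ρ X a a := Relation.ReflTransGen.refl

theorem reach_trans {a b c : M.D} (h : M.reach ρ X a b) (h' : M.reach ρ X b c) :
    M.reach ρ X a c := Relation.ReflTransGen.trans h h'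

theorem reach_rho (a : M.D) : M.reach ρ X a (ρ a) :=
  Relation.ReflTransGen.single (Or.inl rfl)

theorem reach_pow (n : ℕ) (a : M.D) : M.reach ρ X a ((ρ ^ n) a) := by
  induction n with
  | zero => simpa using reach_refl a
  | succ n ih =>
      have : (ρ ^ (n+1)) a = ρ ((ρ ^ n) a) := by
        rw [pow_succ' ρ n]; rfl
      rw [this]
      exact ih.trans (reach_rho _)

theorem reach_of_sameCycle {a b : M.D} (h : ρ.SameCycle a b) : M.reach ρ X a b := by
  obtain ⟨i, -, rfl⟩ := h.exists_pow_eq'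
  exact reach_pow i a

theorem reach_theta {a : M.D} (ha : a ∈ X) : M.reach ρ X a (M.θ a) :=
  Relation.ReflTransGen.single (Or.inr ⟨ha, rfl⟩)

theorem reach_symm (hX : M.Closed X) {a b : M.D} (h : M.reach ρ X a b) : M.reach ρ X b a := by
  induction h with
  | refl => exact reach_refl a
  | tail h1 h2 ih =>
      rcases h2 with h2 | ⟨hx, h2⟩
      · subst h2
        exact (reach_of_sameCycle ⟨-1, by simp⟩).trans ih
      · subst h2
        exact ((reach_theta (hX.mem_iff.mpr (by simpa [M.θ_invol] using hx))).trans
          (by rw [M.θ_invol])).trans ih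

theorem reach_mono {Y : Set M.D} (hXY : X ⊆ Y) {a b : M.D} (h : M.reach ρ X a b) :
    M.reach ρ Y a b := by
  induction h with
  | refl => exact reach_refl a
  | tail h1 h2 ih =>
      exact ih.tail (by rcases h2 with h | ⟨hx, h⟩; exacts [Or.inl h, Or.inr ⟨hXY hx, h⟩])

variable (M) in
/-- the setoid of `reach`-classes. -/
def reachSetoid (ρ : Equiv.Perm M.D) (X : Set M.D) (hX : M.Closed X) : Setoid M.D :=
  ⟨M.reach ρ X, ⟨fun a => reach_refl a, fun h => reach_symm hX h, fun h h' => reach_trans h h'⟩⟩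

end PlaneMap

namespace PlaneMap

variable {M : PlaneMap}

theorem zmod_one_eq (i j : ZMod 1) : i = j := by
  haveI : Subsingleton (ZMod 1) := (ZMod.subsingleton_iff).mpr rfl
  exact Subsingleton.elim i j

/-- Build an `IsCycleIn` cycle from data indexed by `ℕ`. -/
theorem isCycleIn_of_fn (ρ : Equiv.Perm M.D) {ℓ : ℕ} (hℓ : 0 < ℓ) (w : ℕ → M.D)
    (h1 : ∀ i, i + 1 < ℓ → ρ.SameCycle (M.θ (w i)) (w (i + 1)))
    (h1' : ρ.SameCycle (M.θ (w (ℓ - 1))) (w 0))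
    (h2 : ∀ i j, i < ℓ → j < ℓ → ρ.SameCycle (w i) (w j) → i = j)
    (h3 : ∀ i j, i < ℓ → j < ℓ → (w i = w j ∨ w i = M.θ (w j)) → i = j) :
    M.IsCycleIn ρ ℓ (fun t => w t.val) := by
  haveI : NeZero ℓ := ⟨hℓ.ne'⟩
  have hvlt : ∀ i : ZMod ℓ, i.val < ℓ := fun i => ZMod.val_lt i
  have hval1 : ∀ i : ZMod ℓ, (i + 1).val = (i.val + 1) % ℓ := by
    intro i
    rcases eq_or_lt_of_le (show 1 ≤ ℓ from hℓ) with h1 | h1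
    · have : Subsingleton (ZMod ℓ) := by
        rw [ZMod.subsingleton_iff]; omega
      have hv0 : (i + 1).val = i.val := by rw [Subsingleton.elim (i+1) i]
      have : i.val = 0 := by have := hvlt i; omega
      rw [hv0, this]; simp; omega
    · haveI : Fact (1 < ℓ) := ⟨h1⟩
      rw [ZMod.val_add, ZMod.val_one]
  refine ⟨hℓ, ?_, ?_, ?_⟩
  · intro i
    simp only [hval1]
    rcases Nat.lt_or_ge (i.val + 1) ℓ with h | h
    · rw [Nat.mod_eq_of_lt h]; exact h1 _ h
    · have he : i.val + 1 = ℓ := by have := hvlt i; omega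
      have h0 : (i.val + 1) % ℓ = 0 := by rw [he, Nat.mod_self]
      rw [h0, show i.val = ℓ - 1 by omega]
      exact h1'
  · intro i j h
    exact ZMod.val_injective ℓ (h2 _ _ (hvlt i) (hvlt j) h)
  · intro i j h
    exact ZMod.val_injective ℓ (h3 _ _ (hvlt i) (hvlt j) h)

/-- A walk from `a` to `b` along edge-darts `u 0, …, u (m-1)`. -/
def Wlk (ρ : Equiv.Perm M.D) (a b : M.D) (u : ℕ → M.D) (m : ℕ) : Prop :=
  (∀ i, i + 1 < m → ρ.SameCycle (M.θ (u i)) (u (i + 1))) ∧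
  (m = 0 → ρ.SameCycle a b) ∧
  (0 < m → ρ.SameCycle a (u 0) ∧ ρ.SameCycle (M.θ (u (m - 1))) b)

theorem reach_wlk {ρ : Equiv.Perm M.D} {X : Set M.D} {a b : M.D} (h : M.reach ρ X a b) :
    ∃ m u, Wlk ρ a b u m ∧ ∀ i, i < m → u i ∈ X := by
  induction h with
  | refl => exact ⟨0, fun _ => a, ⟨fun i h => by omega, fun _ => ⟨0, rfl⟩, fun h => by omega⟩,
      fun i h => by omega⟩
  | @tail x y h1 h2 ih =>
      obtain ⟨m, u, ⟨hc, h0, hp⟩, hmem⟩ := ih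
      rcases h2 with h2 | ⟨hx, h2⟩
      · subst h2
        refine ⟨m, u, ⟨hc, fun hm => (h0 hm).trans ⟨1, rfl⟩, fun hm => ⟨(hp hm).1,
          (hp hm).2.trans ⟨1, rfl⟩⟩⟩, hmem⟩
      · subst h2
        refine ⟨m + 1, fun i => if i < m then u i else x, ⟨?_, by omega, ?_⟩, ?_⟩
        · intro i hi
          rcases Nat.lt_or_ge (i + 1) m with h | h
          · simp only [if_pos (by omega : i < m), if_pos h]; exact hc i h
          · have him : i + 1 = m := by omega
            simp only [if_pos (by omega : i < m), if_neg (by omega : ¬ i + 1 < m)]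
            have := (hp (by omega)).2
            rw [(by omega : m - 1 = i)] at this
            exact this
        · intro _
          constructor
          · rcases Nat.eq_zero_or_pos m with hm | hm
            · subst hm; simpa using h0 rfl
            · simp only [if_pos hm]; exact (hp hm).1
          · simp only [Nat.add_sub_cancel, if_neg (lt_irrefl m)]
            exact Equiv.Perm.SameCycle.refl _ _
        · intro i hi
          by_cases h : i < m
          · simp only [if_pos h]; exact hmem i h
          · simp only [if_neg h]; exact hx

/-- Key extraction lemma: in an acyclic dart set `X`, the two ends of an edge of `X`
are not connected by the rest of `X`. -/
theorem not_reach_diff {ρ : Equiv.Perm M.D} {X : Set M.D} (hX : M.Closed X)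
    (hacyc : ∀ ℓ c, M.IsCycleIn ρ ℓ c → ∃ i, c i ∉ X) {a : M.D} (ha : a ∈ X) :
    ¬ M.reach ρ (X \ {a, M.θ a}) a (M.θ a) := by
  intro hr
  obtain ⟨m, u, hw, hmem⟩ := reach_wlk hr
  clear hr
  induction m using Nat.strong_induction_on generalizing u with | _ m IH =>
  obtain ⟨hc, h0, hp⟩ := hw
  -- the vertex representatives of the walk
  set v : ℕ → M.D := fun i => if i = 0 then a else M.θ (u (i - 1)) with hv
  have hvu : ∀ i, i < m → ρ.SameCycle (v i) (u i) := by
    intro i hi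
    rcases Nat.eq_zero_or_pos i with h | h
    · subst h; simpa [hv] using (hp (by omega)).1
    · simp only [hv, if_neg h.ne']
      have := hc (i - 1) (by omega)
      rw [(by omega : i - 1 + 1 = i)] at this
      exact this
  have hvlast : ρ.SameCycle (v m) (M.θ a) := by
    rcases Nat.eq_zero_or_pos m with h | h
    · subst h; simpa [hv] using h0 rfl
    · simp only [hv, if_neg h.ne']; exact (hp h).2
  by_cases hsp : ∃ p q, p < q ∧ q ≤ m ∧ ρ.SameCycle (v p) (v q)
  · -- splice out the repeated part and recurse
    obtain ⟨p, q, hpq, hqm, hsc⟩ := hsp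
    set u' : ℕ → M.D := fun i => if i < p then u i else u (i + (q - p)) with hu'
    set m' : ℕ := m - (q - p) with hm'
    have hsame : ∀ i, p ≤ i → u' i = u (i + (q - p)) := fun i hi => by
      simp only [hu', if_neg (by omega : ¬ i < p)]
    refine IH m' (by omega) u' ⟨?_, ?_, ?_⟩ ?_
    · intro i hi
      rcases Nat.lt_or_ge (i + 1) p with h | h
      · simp only [hu', if_pos (by omega : i < p), if_pos h]; exact hc i (by omega)
      · rcases Nat.lt_or_ge i p with h2 | h2
        · -- i + 1 = p : junction
          have hip : i + 1 = p := by omega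
          have hq : q < m := by omega
          simp only [hu', if_pos h2, if_neg (by omega : ¬ i + 1 < p)]
          have h1 : ρ.SameCycle (M.θ (u i)) (v p) := by
            simp only [hv, if_neg (by omega : p ≠ 0), (by omega : p - 1 = i)]
            exact Equiv.Perm.SameCycle.refl _ _
          have h2 : ρ.SameCycle (v q) (u q) := hvu q hq
          rw [(by omega : i + 1 + (q - p) = q)]
          exact (h1.trans hsc).trans h2
        · simp only [hu', if_neg (by omega : ¬ i < p), if_neg (by omega : ¬ i + 1 < p)]
          rw [(by omega : i + 1 + (q - p) = i + (q - p) + 1)]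
          exact hc _ (by omega)
    · intro h
      -- m' = 0 : p = 0, q = m
      have hp0 : p = 0 := by omega
      have hqm' : q = m := by omega
      have h1 : ρ.SameCycle a (v q) := by simpa [hv, hp0] using hsc
      rw [hqm'] at h1
      exact h1.trans hvlast
    · intro h
      constructor
      · rcases Nat.lt_or_ge 0 p with h2 | h2
        · simp only [hu', if_pos h2]; exact (hp (by omega)).1
        · have hp0 : p = 0 := by omega
          have hq : q < m := by omega
          rw [hsame 0 (by omega), hp0]
          have : ρ.SameCycle a (v q) := by simpa [hv, hp0] using hsc
          simpa using this.trans (hvu q hq)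
      · rcases Nat.lt_or_ge q m with h2 | h2
        · rw [hsame (m' - 1) (by omega), (by omega : m' - 1 + (q - p) = m - 1)]
          exact (hp (by omega)).2
        · -- q = m
          have hqm2 : q = m := by omega
          have hm'p : m' = p := by omega
          have hup : u' (m' - 1) = u (p - 1) := by
            simp only [hu', if_pos (by omega : m' - 1 < p)]; rw [hm'p]
          rw [hup]
          have h1 : ρ.SameCycle (M.θ (u (p - 1))) (v p) := by
            simp only [hv, if_neg (by omega : p ≠ 0)]
            exact Equiv.Perm.SameCycle.refl _ _
          have h2 : ρ.SameCycle (v q) (M.θ a) := by rw [hqm2]; exact hvlast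
          exact (h1.trans hsc).trans h2
    · intro i hi
      by_cases h : i < p
      · simp only [hu', if_pos h]; exact hmem i (by omega)
      · simp only [hu', if_neg h]; exact hmem _ (by omega)
  · -- all vertices distinct : extract a genuine cycle
    push_neg at hsp
    have hvd : ∀ p q, p ≤ m → q ≤ m → ρ.SameCycle (v p) (v q) → p = q := by
      intro p q hpm hqm hsc
      rcases lt_trichotomy p q with h | h | h
      · exact absurd hsc (hsp p q h hqm)
      · exact h
      · exact absurd hsc.symm (hsp q p h hpm)
    rcases Nat.eq_zero_or_pos m with hm | hm
    · -- loop cycle of length 1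
      subst hm
      have hsc : ρ.SameCycle (M.θ (M.θ a)) (M.θ a) := by
        rw [M.θ_invol]; exact h0 rfl
      obtain ⟨i, hi⟩ := hacyc 1 (fun _ => M.θ a)
        (isCycleIn_of_fn ρ (by omega) (fun _ => M.θ a) (fun i h => by omega) hsc
          (fun i j hi hj _ => by omega) (fun i j hi hj _ => by omega))
      exact hi (hX a ha)
    · -- cycle of length m + 1 : θ a, u 0, …, u (m-1)
      set w : ℕ → M.D := fun t => if t = 0 then M.θ a else u (t - 1) with hw
      have hwmem : ∀ t, t < m + 1 → w t ∈ X := by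
        intro t ht
        rcases Nat.eq_zero_or_pos t with h | h
        · subst h; simpa [hw] using hX a ha
        · simp only [hw, if_neg h.ne']; exact (hmem (t - 1) (by omega)).1
      -- vertex classes of the cycle: class (w 0) = class (v m), class (w t) = class (v (t-1))
      have hclass : ∀ t, t < m + 1 → ρ.SameCycle (w t) (v (if t = 0 then m else t - 1)) := by
        intro t ht
        rcases Nat.eq_zero_or_pos t with h | h
        · subst h; simpa [hw] using hvlast.symm
        · simp only [hw, if_neg h.ne']; exact (hvu (t - 1) (by omega)).symm
      have hux : ∀ i, i < m → u i ≠ a ∧ u i ≠ M.θ a := by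
        intro i hi
        have := hmem i hi
        simp only [Set.mem_diff, Set.mem_insert_iff, Set.mem_singleton_iff] at this
        push_neg at this
        exact this.2
      have key : M.IsCycleIn ρ (m + 1) (fun t => w t.val) := by
        refine isCycleIn_of_fn ρ (by omega) w ?_ ?_ ?_ ?_
        · intro i hi
          rcases Nat.eq_zero_or_pos i with h | h
          · subst h
            have e : M.θ (M.θ a) = a := M.θ_invol a
            simp only [hw, if_pos rfl, if_neg (by omega : ¬ (1:ℕ) = 0), e]
            simpa using (hp hm).1
          · simp only [hw, if_neg h.ne', if_neg (by omega : ¬ i + 1 = 0),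
              (by omega : i + 1 - 1 = i - 1 + 1)]
            exact hc (i - 1) (by omega)
        · simp only [hw, if_neg (by omega : ¬ (m + 1 - 1 : ℕ) = 0), if_pos rfl]
          rw [(by omega : m + 1 - 1 - 1 = m - 1)]
          exact (hp hm).2
        · intro i j hi hj hsc
          have h1 := hclass i hi
          have h2 := hclass j hj
          have := hvd _ _ (by split <;> omega) (by split <;> omega)
            ((h1.symm.trans hsc).trans h2)
          split at this <;> split at this <;> omega
        · intro i j hi hj hor
          rcases hor with he | he
          · have h1 := hclass i hi
            have h2 := hclass j hj
            have := hvd _ _ (by split <;> omega) (by split <;> omega)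
              ((h1.symm.trans (he ▸ Equiv.Perm.SameCycle.refl ρ (w j))).trans h2)
            split at this <;> split at this <;> omega
          · -- w i = θ (w j)
            rcases Nat.eq_zero_or_pos j with hj0 | hj0
            · subst hj0
              rcases Nat.eq_zero_or_pos i with hi0 | hi0
              · omega
              · exfalso
                simp only [hw, if_neg hi0.ne', if_pos rfl] at he
                rw [M.θ_invol a] at he
                exact (hux (i - 1) (by omega)).1 he
            · rcases Nat.eq_zero_or_pos i with hi0 | hi0
              · exfalso
                subst hi0
                simp only [hw, if_pos rfl, if_neg hj0.ne'] at he
                have : a = u (j - 1) := by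
                  have := congrArg M.θ he
                  simpa [M.θ_invol] using this
                exact (hux (j - 1) (by omega)).1 this.symm
              · -- both positive : u (i-1) = θ (u (j-1))
                exfalso
                simp only [hw, if_neg hi0.ne', if_neg hj0.ne'] at he
                -- class (u (i-1)) = class (θ (u (j-1))) = class (v j)
                have hθuj : ρ.SameCycle (M.θ (u (j - 1))) (v j) := by
                  simp only [hv, if_neg hj0.ne']
                  exact Equiv.Perm.SameCycle.refl _ _
                have h1 : ρ.SameCycle (v (i - 1)) (v j) :=
                  ((hvu (i - 1) (by omega)).trans
                    (he ▸ Equiv.Perm.SameCycle.refl ρ (u (i-1)))).trans hθuj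
                have hij : i - 1 = j := hvd _ _ (by omega) (by omega) h1
                -- then u j = θ (u (j - 1)), so v (j+1) ~ v (j-1)
                rw [hij] at he
                have huj : u j = M.θ (u (j - 1)) := he
                have hj1m : j + 1 ≤ m := by omega
                have hvj1 : ρ.SameCycle (v (j + 1)) (v (j - 1)) := by
                  have e1 : v (j + 1) = M.θ (u j) := by
                    simp only [hv, if_neg (by omega : ¬ j + 1 = 0), Nat.add_sub_cancel]
                  have e2 : M.θ (u j) = u (j - 1) := by rw [huj, M.θ_invol]
                  rw [e1, e2]
                  exact (hvu (j - 1) (by omega)).symm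
                have := hvd _ _ (by omega) (by omega) hvj1
                omega
      obtain ⟨i, hi⟩ := hacyc (m + 1) _ key
      exact hi (hwmem i.val (ZMod.val_lt i))

end PlaneMap

namespace PlaneMap

variable {M : PlaneMap} {ρ : Equiv.Perm M.D} {X : Set M.D}

theorem reach_split (hX : M.Closed X) (a : M.D) {b c : M.D} (h : M.reach ρ X b c) :
    M.reach ρ (X \ {a, M.θ a}) b c ∨
      (M.reach ρ (X \ {a, M.θ a}) b a ∧ M.reach ρ (X \ {a, M.θ a}) (M.θ a) c) ∨
      (M.reach ρ (X \ {a, M.θ a}) b (M.θ a) ∧ M.reach ρ (X \ {a, M.θ a}) a c) := by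
  induction h with
  | refl => exact Or.inl (reach_refl b)
  | @tail x y hbx hxy ih =>
      rcases hxy with h2 | ⟨hx, h2⟩
      · -- a rotation step, available in the smaller set as well
        rcases ih with h | ⟨ha1, ha2⟩ | ⟨ha1, ha2⟩
        · exact Or.inl (h.tail (Or.inl h2))
        · exact Or.inr (Or.inl ⟨ha1, ha2.tail (Or.inl h2)⟩)
        · exact Or.inr (Or.inr ⟨ha1, ha2.tail (Or.inl h2)⟩)
      · by_cases hxa : x = a
        · subst hxa; subst h2
          rcases ih with h | ⟨ha1, _⟩ | ⟨ha1, _⟩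
          · exact Or.inr (Or.inl ⟨h, reach_refl _⟩)
          · exact Or.inr (Or.inl ⟨ha1, reach_refl _⟩)
          · exact Or.inl ha1
        · by_cases hxθ : x = M.θ a
          · subst hxθ; subst h2
            rw [M.θ_invol a]
            rcases ih with h | ⟨ha1, _⟩ | ⟨ha1, _⟩
            · exact Or.inr (Or.inr ⟨h, reach_refl _⟩)
            · exact Or.inl ha1
            · exact Or.inr (Or.inr ⟨ha1, reach_refl _⟩)
          · have hx' : x ∈ X \ {a, M.θ a} := ⟨hx, by simp [hxa, hxθ]⟩
            subst h2
            rcases ih with h | ⟨ha1, ha2⟩ | ⟨ha1, ha2⟩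
            · exact Or.inl (h.tail (Or.inr ⟨hx', rfl⟩))
            · exact Or.inr (Or.inl ⟨ha1, ha2.tail (Or.inr ⟨hx', rfl⟩)⟩)
            · exact Or.inr (Or.inr ⟨ha1, ha2.tail (Or.inr ⟨hx', rfl⟩)⟩)

theorem card_step_le (hX : M.Closed X) (a : M.D) :
    Nat.card (Quotient (M.reachSetoid ρ (X \ {a, M.θ a}) (hX.diff_pair a))) ≤
      Nat.card (Quotient (M.reachSetoid ρ X hX)) + 1 := by
  classical
  set X' := X \ {a, M.θ a} with hX'
  set s' := M.reachSetoid ρ X' (hX.diff_pair a) with hs'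
  set s := M.reachSetoid ρ X hX with hs
  have hmono : ∀ {b c : M.D}, M.reach ρ X' b c → M.reach ρ X b c :=
    fun h => reach_mono Set.diff_subset h
  let f : Quotient s' → Quotient s ⊕ Unit :=
    Quotient.lift
      (fun b => if M.reach ρ X' b a then Sum.inr Unit.unit else Sum.inl (Quotient.mk s b))
      (by
        intro b c hbc
        have hbc' : M.reach ρ X' b c := hbc
        by_cases hb : M.reach ρ X' b a <;> by_cases hc : M.reach ρ X' c a
        · rw [if_pos hb, if_pos hc]
        · exact absurd ((reach_symm (hX.diff_pair a) hbc').trans hb) hc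
        · exact absurd (hbc'.trans hc) hb
        · rw [if_neg hb, if_neg hc]
          exact congrArg Sum.inl (Quotient.sound (hmono hbc')))
  have hinj : Function.Injective f := by
    refine Quotient.ind₂ ?_
    intro b c hfbc
    simp only [f, Quotient.lift_mk] at hfbc
    by_cases hb : M.reach ρ X' b a <;> by_cases hc : M.reach ρ X' c a
    · exact Quotient.sound (hb.trans (reach_symm (hX.diff_pair a) hc))
    · rw [if_pos hb, if_neg hc] at hfbc; exact absurd hfbc (by simp)
    · rw [if_neg hb, if_pos hc] at hfbc; exact absurd hfbc (by simp)
    · rw [if_neg hb, if_neg hc] at hfbc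
      have hbc : M.reach ρ X b c := Quotient.exact (Sum.inl.inj hfbc)
      rcases reach_split hX a hbc with h | ⟨h1, _⟩ | ⟨_, h2⟩
      · exact Quotient.sound h
      · exact absurd h1 hb
      · exact absurd (reach_symm (hX.diff_pair a) h2) hc
  haveI : Finite (Quotient s) := Quotient.finite _
  haveI : Finite (Quotient s') := Quotient.finite _
  calc Nat.card (Quotient s') ≤ Nat.card (Quotient s ⊕ Unit) :=
        Nat.card_le_card_of_injective f hinj
    _ = Nat.card (Quotient s) + 1 := by rw [Nat.card_sum]; simp

theorem pair_subset (hX : M.Closed X) {a : M.D} (ha : a ∈ X) :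
    ({a, M.θ a} : Set M.D) ⊆ X := by
  intro x hx
  rcases hx with h | h
  · subst h; exact ha
  · simp only [Set.mem_singleton_iff] at h; subst h; exact hX a ha

theorem ncard_diff_pair {a : M.D} (ha : a ∈ X) (hX : M.Closed X) :
    (X \ {a, M.θ a}).ncard = X.ncard - 2 := by
  rw [Set.ncard_diff (pair_subset hX ha),
    Set.ncard_pair (fun h => M.θ_ne a h.symm)]

theorem two_le_ncard (hX : M.Closed X) {a : M.D} (ha : a ∈ X) : 2 ≤ X.ncard := by
  have := Set.ncard_le_ncard (pair_subset hX ha) (Set.toFinite X)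
  rwa [Set.ncard_pair (fun h => M.θ_ne a h.symm)] at this

theorem reach_empty_iff {a b : M.D} : M.reach ρ ∅ a b ↔ ρ.SameCycle a b := by
  constructor
  · intro h
    induction h with
    | refl => exact Equiv.Perm.SameCycle.refl _ _
    | tail h1 h2 ih =>
        rcases h2 with h2 | ⟨hx, _⟩
        · exact ih.trans (h2 ▸ ⟨1, rfl⟩)
        · exact absurd hx (Set.notMem_empty _)
  · exact reach_of_sameCycle

theorem card_reach_empty (ρ : Equiv.Perm M.D) (h : M.Closed (∅ : Set M.D)) :
    Nat.card (Quotient (M.reachSetoid ρ ∅ h)) = Nat.card (Quotient (sameCycleSetoid ρ)) :=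
  Nat.card_congr (Quotient.congrRight fun _ _ => reach_empty_iff)

/-- Connectivity bounds the vertex count: `V ≤ c(X) + #edges(X)`. -/
theorem card_lower (ρ : Equiv.Perm M.D) :
    ∀ (n : ℕ) (X : Set M.D) (hX : M.Closed X), X.ncard = n →
      Nat.card (Quotient (sameCycleSetoid ρ)) ≤
        Nat.card (Quotient (M.reachSetoid ρ X hX)) + n / 2 := by
  intro n
  induction n using Nat.strong_induction_on with | _ n IH =>
  intro X hX hn
  rcases Set.eq_empty_or_nonempty X with h | ⟨a, ha⟩
  · subst h
    simp only [Set.ncard_empty] at hn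
    subst hn
    rw [card_reach_empty ρ hX]
    omega
  · have h2 : 2 ≤ n := hn ▸ two_le_ncard hX ha
    have hn' : (X \ {a, M.θ a}).ncard = n - 2 := by rw [ncard_diff_pair ha hX, hn]
    have := IH (n - 2) (by omega) (X \ {a, M.θ a}) (hX.diff_pair a) hn'
    have hstep := card_step_le (ρ := ρ) hX a
    omega

/-- Acyclicity bounds the vertex count the other way: `c(X) + #edges(X) ≤ V`. -/
theorem card_upper (ρ : Equiv.Perm M.D) :
    ∀ (n : ℕ) (X : Set M.D) (hX : M.Closed X),
      (∀ ℓ c, M.IsCycleIn ρ ℓ c → ∃ i, c i ∉ X) → X.ncard = n →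
      Nat.card (Quotient (M.reachSetoid ρ X hX)) + n / 2 ≤
        Nat.card (Quotient (sameCycleSetoid ρ)) := by
  intro n
  induction n using Nat.strong_induction_on with | _ n IH =>
  intro X hX hacyc hn
  rcases Set.eq_empty_or_nonempty X with h | ⟨a, ha⟩
  · subst h
    simp only [Set.ncard_empty] at hn
    subst hn
    rw [card_reach_empty ρ hX]
    omega
  · have h2 : 2 ≤ n := hn ▸ two_le_ncard hX ha
    set X' := X \ {a, M.θ a} with hX'def
    have hn' : X'.ncard = n - 2 := by rw [hX'def, ncard_diff_pair ha hX, hn]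
    have hacyc' : ∀ ℓ c, M.IsCycleIn ρ ℓ c → ∃ i, c i ∉ X' := by
      intro ℓ c hc
      obtain ⟨i, hi⟩ := hacyc ℓ c hc
      exact ⟨i, fun h => hi h.1⟩
    have IH2 := IH (n - 2) (by omega) X' (hX.diff_pair a) hacyc' hn'
    -- the step : removing the edge `{a, θ a}` strictly increases the number of components
    have hstep : Nat.card (Quotient (M.reachSetoid ρ X hX)) + 1 ≤
        Nat.card (Quotient (M.reachSetoid ρ X' (hX.diff_pair a))) := by
      classical
      set s' := M.reachSetoid ρ X' (hX.diff_pair a) with hs'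
      set s := M.reachSetoid ρ X hX with hs
      haveI : Finite (Quotient s) := Quotient.finite _
      haveI : Finite (Quotient s') := Quotient.finite _
      haveI := Fintype.ofFinite (Quotient s)
      haveI := Fintype.ofFinite (Quotient s')
      let f : Quotient s' → Quotient s :=
        Quotient.lift (fun b => Quotient.mk s b)
          (fun b c hbc => Quotient.sound (reach_mono Set.diff_subset hbc))
      have hsurj : Function.Surjective f := by
        refine Quotient.ind ?_
        intro b; exact ⟨Quotient.mk s' b, rfl⟩
      have hninj : ¬ Function.Injective f := by
        intro hinj
        have h1 : f (Quotient.mk s' a) = f (Quotient.mk s' (M.θ a)) :=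
          Quotient.sound (reach_theta ha)
        have h2 := hinj h1
        exact not_reach_diff hX hacyc ha (Quotient.exact h2)
      have := Fintype.card_lt_of_surjective_not_injective f hsurj hninj
      rw [Nat.card_eq_fintype_card, Nat.card_eq_fintype_card]
      omega
    omega

theorem ncard_even : ∀ (n : ℕ) (X : Set M.D), M.Closed X → X.ncard = n → n % 2 = 0 := by
  intro n
  induction n using Nat.strong_induction_on with | _ n IH =>
  intro X hX hn
  rcases Set.eq_empty_or_nonempty X with h | ⟨a, ha⟩
  · subst h; simp only [Set.ncard_empty] at hn; omega
  · have h2 : 2 ≤ n := hn ▸ two_le_ncard hX ha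
    have hn' : (X \ {a, M.θ a}).ncard = n - 2 := by rw [ncard_diff_pair ha hX, hn]
    have := IH (n - 2) (by omega) _ (hX.diff_pair a) hn'
    omega

theorem sameCycle_theta_iff {a b : M.D} : M.θ.SameCycle a b ↔ b = a ∨ b = M.θ a := by
  constructor
  · rintro ⟨n, rfl⟩
    have hsq : M.θ ^ 2 = 1 := by
      ext x; simpa [sq] using M.θ_invol x
    rcases Int.even_or_odd n with ⟨k, hk⟩ | ⟨k, hk⟩
    · left
      rw [hk, (by ring : k + k = 2 * k), zpow_mul]
      norm_cast
      rw [hsq]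
      simp
    · right
      rw [hk, zpow_add, zpow_mul]
      norm_cast
      rw [hsq]
      simp
  · rintro (rfl | rfl)
    · exact Equiv.Perm.SameCycle.refl _ _
    · exact ⟨1, rfl⟩

theorem two_mul_card_edges (M : PlaneMap) :
    Nat.card (Quotient (sameCycleSetoid M.θ)) * 2 = Nat.card M.D := by
  classical
  set s := sameCycleSetoid M.θ with hs
  let f : Quotient s × Bool → M.D := fun p => cond p.2 (M.θ p.1.out) p.1.out
  have hmemclass : ∀ (q : Quotient s) (b : Bool), Quotient.mk s (f (q, b)) = q := by
    intro q b
    have h1 : M.θ.SameCycle q.out (f (q, b)) := by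
      rcases Bool.eq_false_or_eq_true b with h | h <;> subst h
      · exact ⟨1, rfl⟩
      · exact Equiv.Perm.SameCycle.refl _ _
    calc Quotient.mk s (f (q, b)) = Quotient.mk s q.out := (Quotient.sound h1).symm
      _ = q := q.out_eq
  have hbij : Function.Bijective f := by
    constructor
    · rintro ⟨q, b⟩ ⟨q', b'⟩ hqq
      have h1 : q = q' := by rw [← hmemclass q b, ← hmemclass q' b', hqq]
      subst h1
      have h2 : b = b' := by
        by_contra hbb
        rcases Bool.eq_false_or_eq_true b with h | h <;> subst h <;>
          rcases Bool.eq_false_or_eq_true b' with h' | h' <;> subst h'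
        · exact hbb rfl
        · exact M.θ_ne _ (show M.θ q.out = q.out from hqq)
        · exact M.θ_ne _ (show M.θ q.out = q.out from hqq.symm)
        · exact hbb rfl
      rw [h2]
    · intro x
      have hsc : M.θ.SameCycle (Quotient.mk s x).out x :=
        Quotient.exact ((Quotient.mk s x).out_eq)
      rcases sameCycle_theta_iff.mp hsc with h | h
      · exact ⟨⟨Quotient.mk s x, false⟩, h.symm⟩
      · exact ⟨⟨Quotient.mk s x, true⟩, h.symm⟩
  have := Nat.card_congr (Equiv.ofBijective f hbij)
  rw [Nat.card_prod] at this
  simpa [mul_comm] using this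

theorem card_one_of_connected {sX : M.Closed X} (h : ∀ a b : M.D, M.reach ρ X a b) :
    Nat.card (Quotient (M.reachSetoid ρ X sX)) = 1 := by
  rw [Nat.card_eq_one_iff_unique]
  constructor
  · constructor
    refine Quotient.ind₂ ?_
    intro a b
    exact Quotient.sound (h a b)
  · exact ⟨Quotient.mk _ (Classical.choice M.nonemptyD)⟩

end PlaneMap

namespace PlaneMap

variable {M : PlaneMap} {S : Set M.D}

theorem sc_of_eq {ρ : Equiv.Perm M.D} {a b : M.D} (h : a = b) : ρ.SameCycle a b :=
  h ▸ Equiv.Perm.SameCycle.refl ρ a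

theorem loop_absurd (hT2 : ∀ ℓ c, M.IsCycleIn M.σ ℓ c → ∃ i, c i ∉ S)
    {w : M.D} (hw : w ∈ S) (h : M.σ.SameCycle (M.θ w) w) : False := by
  obtain ⟨i, hi⟩ := hT2 1 (fun _ => w)
    (isCycleIn_of_fn M.σ one_pos (fun _ => w) (fun i hi => by omega) h
      (fun i j hi hj _ => by omega) (fun i j hi hj _ => by omega))
  exact hi hw

theorem odd_change {Pred : M.D → Prop} {x : M.D}
    (hx : ¬ (Pred x ↔ Pred (M.σ x)))
    (hunique : ∀ y, M.σ.SameCycle x y → y ≠ x → (Pred y ↔ Pred (M.σ y))) : False := by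
  classical
  have hex : ∃ j : ℕ, (M.σ ^ j) (M.σ x) = x := by
    obtain ⟨i, -, hi⟩ :=
      (Equiv.Perm.SameCycle.symm ⟨1, rfl⟩ : M.σ.SameCycle (M.σ x) x).exists_pow_eq'
    exact ⟨i, hi⟩
  set j := Nat.find hex with hjdef
  have hj : (M.σ ^ j) (M.σ x) = x := Nat.find_spec hex
  have hiter : ∀ k, k ≤ j → (Pred (M.σ x) ↔ Pred ((M.σ ^ k) (M.σ x))) := by
    intro k
    induction k with
    | zero => intro _; simp
    | succ k ih =>
        intro hk
        have hne : (M.σ ^ k) (M.σ x) ≠ x := Nat.find_min hex (by omega)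
        have hsc : M.σ.SameCycle x ((M.σ ^ k) (M.σ x)) := by
          have h' : (M.σ ^ (k + 1)) x = (M.σ ^ k) (M.σ x) := by rw [pow_succ]; rfl
          exact ⟨((k + 1 : ℕ) : ℤ), by rw [zpow_natCast, h']⟩
        have hstep := hunique _ hsc hne
        have heq : M.σ ((M.σ ^ k) (M.σ x)) = (M.σ ^ (k + 1)) (M.σ x) := by
          rw [pow_succ']; rfl
        rw [heq] at hstep
        exact (ih (by omega)).trans hstep
  have hfin := hiter j le_rfl
  rw [hj] at hfin
  exact hx hfin.symm

/-- A simple path in the subgraph `W` (with respect to the vertex permutation `σ`). -/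
def GP (M : PlaneMap) (W : Set M.D) (u : ℕ → M.D) (m : ℕ) : Prop :=
  0 < m ∧ (∀ i, i < m → u i ∈ W) ∧ (∀ i, i + 1 < m → M.σ.SameCycle (M.θ (u i)) (u (i + 1))) ∧
  (∀ i j, i < m → j < m → M.σ.SameCycle (u i) (u j) → i = j) ∧
  (∀ i, i < m → ¬ M.σ.SameCycle (u i) (M.θ (u (m - 1))))

theorem no_even_subgraph (hT2 : ∀ ℓ c, M.IsCycleIn M.σ ℓ c → ∃ i, c i ∉ S)
    (W : Set M.D) (hWS : W ⊆ S) (hWθ : ∀ x ∈ W, M.θ x ∈ W)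
    (hodd : ∀ x ∈ W, ∃ y, y ∈ W ∧ M.σ.SameCycle x y ∧ y ≠ x)
    (hne : ∃ w, w ∈ W) : False := by
  classical
  obtain ⟨w, hw⟩ := hne
  have hnl : ∀ x ∈ W, ¬ M.σ.SameCycle x (M.θ x) :=
    fun x hx h => loop_absurd hT2 (hWS hx) h.symm
  have h1 : M.GP W (fun _ => w) 1 := by
    refine ⟨one_pos, fun i _ => hw, fun i hi => by omega, fun i j hi hj _ => by omega, ?_⟩
    intro i _
    exact hnl w hw
  have hbound : ∀ u m, M.GP W u m → m ≤ Fintype.card M.D := by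
    intro u m hgp
    obtain ⟨h0, hmem, hch, hinj, hlast⟩ := hgp
    have : Function.Injective (fun i : Fin m => u i) := by
      intro i j hij
      have hij' : u i.val = u j.val := hij
      have hsc : M.σ.SameCycle (u i.val) (u j.val) := by
        rw [hij']
      exact Fin.ext (hinj _ _ i.isLt j.isLt hsc)
    simpa using Fintype.card_le_of_injective _ this
  set mx := Nat.findGreatest (fun m => ∃ u, M.GP W u m) (Fintype.card M.D) with hmxdef
  obtain ⟨u, hu⟩ : ∃ u, M.GP W u mx :=
    Nat.findGreatest_spec (P := fun m => ∃ u, M.GP W u m) (hbound _ _ h1)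
      ⟨fun _ => w, h1⟩
  obtain ⟨hm0, humem, huch, huinj, hulast⟩ := hu
  set d := M.θ (u (mx - 1)) with hddef
  have hd : d ∈ W := hWθ _ (humem (mx - 1) (by omega))
  obtain ⟨w', hw'W, hw'sc, hw'ne⟩ := hodd d hd
  by_cases hloop : M.σ.SameCycle w' (M.θ w')
  · exact hnl w' hw'W hloop
  by_cases hon : ∃ j, j < mx ∧ M.σ.SameCycle (M.θ w') (u j)
  · -- a cycle
    obtain ⟨j, hj, hjsc⟩ := hon
    set L := mx - j + 1 with hLdef
    set c : ℕ → M.D := fun t => if t < mx - j then u (j + t) else w' with hcdef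
    have hcW : ∀ t, t < L → c t ∈ W := by
      intro t ht
      by_cases h : t < mx - j
      · simp only [hcdef, if_pos h]; exact humem _ (by omega)
      · simp only [hcdef, if_neg h]; exact hw'W
    -- vertex classification: for t < L, the class of (c t)
    have hscd : ∀ t, t < mx - j → ¬ M.σ.SameCycle (u (j + t)) d := fun t ht =>
      hulast (j + t) (by omega)
    have hcyc : M.IsCycleIn M.σ L (fun t => c t.val) := by
      refine isCycleIn_of_fn M.σ (by omega) c ?_ ?_ ?_ ?_
      · intro t ht
        by_cases h : t + 1 < mx - j
        · simp only [hcdef, if_pos (by omega : t < mx - j), if_pos h]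
          rw [(by omega : j + (t + 1) = j + t + 1)]
          exact huch (j + t) (by omega)
        · have ht1 : t + 1 = mx - j := by omega
          simp only [hcdef, if_pos (by omega : t < mx - j), if_neg (by omega : ¬ t + 1 < mx - j)]
          rw [(by omega : j + t = mx - 1)]
          exact hw'sc
      · simp only [hcdef, if_neg (by omega : ¬ L - 1 < mx - j), if_pos (by omega : 0 < mx - j)]
        rw [(by omega : j + 0 = j)]
        exact hjsc
      · intro s t hs ht hsc
        by_cases h1 : s < mx - j <;> by_cases h2 : t < mx - j
        · simp only [hcdef, if_pos h1, if_pos h2] at hsc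
          have := huinj _ _ (by omega) (by omega) hsc
          omega
        · simp only [hcdef, if_pos h1, if_neg h2] at hsc
          exact absurd (hsc.trans hw'sc.symm) (hscd s h1)
        · simp only [hcdef, if_neg h1, if_pos h2] at hsc
          exact absurd (hsc.symm.trans hw'sc.symm) (hscd t h2)
        · omega
      · intro s t hs ht hor
        rcases hor with he | he
        · -- equal darts
          by_cases h1 : s < mx - j <;> by_cases h2 : t < mx - j
          · simp only [hcdef, if_pos h1, if_pos h2] at he
            have := huinj _ _ (by omega) (by omega) (sc_of_eq he)
            omega
          · simp only [hcdef, if_pos h1, if_neg h2] at he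
            exact absurd ((sc_of_eq he).trans hw'sc.symm) (hscd s h1)
          · simp only [hcdef, if_neg h1, if_pos h2] at he
            exact absurd ((sc_of_eq he.symm).trans hw'sc.symm) (hscd t h2)
          · omega
        · -- c s = θ (c t)
          exfalso
          by_cases h2 : t < mx - j
          · simp only [hcdef, if_pos h2] at he
            by_cases h3 : j + t + 1 < mx
            · -- class of θ (u (j+t)) is that of u (j+ت+1)
              have hclass : M.σ.SameCycle (M.θ (u (j + t))) (u (j + t + 1)) :=
                huch (j + t) h3
              by_cases h1 : s < mx - j
              · simp only [hcdef, if_pos h1] at he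
                have : M.σ.SameCycle (u (j + s)) (u (j + t + 1)) :=
                  (sc_of_eq he).trans hclass
                have hst : j + s = j + t + 1 := huinj _ _ (by omega) (by omega) this
                -- backtracking: u (j+t+1) = θ (u (j+t))
                have hbt : u (j + t + 1) = M.θ (u (j + t)) := by rw [← hst]; exact he
                by_cases h4 : j + t + 2 < mx
                · have := huch (j + t + 1) h4
                  rw [hbt, M.θ_invol] at this
                  have := huinj _ _ (by omega) (by omega) this
                  omega
                · -- j + t + 2 = mx : θ (u (mx-1)) = u (j+t), i.e. d = u (j+t)
                  have hdd : d = u (j + t) := by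
                    rw [hddef, (by omega : mx - 1 = j + t + 1), hbt, M.θ_invol]
                  exact hscd t h2 (sc_of_eq hdd.symm)
              · -- s = mx - j : w' = θ (u (j+t))
                simp only [hcdef, if_neg h1] at he
                have h5 : M.σ.SameCycle w' (u (j + t + 1)) :=
                  (sc_of_eq he).trans hclass
                have h6 : M.σ.SameCycle (u (j + (t + 1))) d := by
                  rw [(by omega : j + (t + 1) = j + t + 1)]
                  exact h5.symm.trans hw'sc.symm
                exact hscd (t + 1) (by omega) h6
            · -- j + t + 1 = mx : θ (u (j+t)) = d
              have hdd : M.θ (u (j + t)) = d := by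
                rw [hddef, (by omega : mx - 1 = j + t)]
              rw [hdd] at he
              by_cases h1 : s < mx - j
              · simp only [hcdef, if_pos h1] at he
                exact hscd s h1 (sc_of_eq he)
              · simp only [hcdef, if_neg h1] at he
                exact hw'ne he
          · -- t = mx - j : c t = w', c s = θ w'
            simp only [hcdef, if_neg h2] at he
            by_cases h1 : s < mx - j
            · simp only [hcdef, if_pos h1] at he
              have hs0 : j + s = j := huinj _ _ (by omega) (by omega)
                ((sc_of_eq he).trans hjsc)
              have huj : u j = M.θ w' := hs0 ▸ he
              have hwj : w' = M.θ (u j) := by rw [huj, M.θ_invol]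
              by_cases h4 : j + 1 < mx
              · have hch := huch j h4
                rw [← hwj] at hch
                exact hscd 1 (by omega) (hch.symm.trans hw'sc.symm)
              · have hwd : w' = d := by rw [hwj, hddef, (by omega : mx - 1 = j)]
                exact hw'ne hwd
            · simp only [hcdef, if_neg h1] at he
              exact M.θ_ne w' he.symm
    obtain ⟨i, hi⟩ := hT2 L _ hcyc
    exact hi (hWS (hcW i.val (ZMod.val_lt i)))
  · -- extend the maximal path: contradiction
    push_neg at hon
    set u' : ℕ → M.D := fun i => if i < mx then u i else w' with hu'def
    have hext : M.GP W u' (mx + 1) := by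
      refine ⟨by omega, ?_, ?_, ?_, ?_⟩
      · intro i hi
        by_cases h : i < mx
        · simp only [hu'def, if_pos h]; exact humem i h
        · simp only [hu'def, if_neg h]; exact hw'W
      · intro i hi
        by_cases h : i + 1 < mx
        · simp only [hu'def, if_pos (by omega : i < mx), if_pos h]; exact huch i h
        · have : i + 1 = mx := by omega
          simp only [hu'def, if_pos (by omega : i < mx), if_neg (by omega : ¬ i + 1 < mx)]
          rw [(by omega : i = mx - 1)]
          exact hw'sc
      · intro i k hi hk hsc
        by_cases h1 : i < mx <;> by_cases h2 : k < mx
        · simp only [hu'def, if_pos h1, if_pos h2] at hsc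
          exact huinj i k h1 h2 hsc
        · simp only [hu'def, if_pos h1, if_neg h2] at hsc
          exact absurd (hsc.trans hw'sc.symm) (hulast i h1)
        · simp only [hu'def, if_neg h1, if_pos h2] at hsc
          exact absurd (hsc.symm.trans hw'sc.symm) (hulast k h2)
        · omega
      · intro i hi
        have hlast : u' (mx + 1 - 1) = w' := by
          simp only [hu'def, Nat.add_sub_cancel, if_neg (lt_irrefl mx)]
        rw [hlast]
        by_cases h : i < mx
        · simp only [hu'def, if_pos h]
          intro hsc
          exact hon i h hsc.symm
        · simp only [hu'def, if_neg h]
          exact hloop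
    exact Nat.findGreatest_is_greatest (P := fun m => ∃ u, M.GP W u m)
      (by omega) (hbound _ _ hext) ⟨u', hext⟩

end PlaneMap

namespace PlaneMap

variable {M : PlaneMap} {S : Set M.D}

theorem dual_connected (hS : M.Closed S) (hT : M.IsSpanningTree S) (a b : M.D) :
    M.reach (M.σ * M.θ) Sᶜ a b := by
  by_contra hab
  set ρ := M.σ * M.θ with hρ
  set P : Set M.D := {x | M.reach ρ Sᶜ a x} with hP
  have hScc : M.Closed Sᶜ := hS.compl
  have hPmem : ∀ {x y : M.D}, M.reach ρ Sᶜ x y → (x ∈ P ↔ y ∈ P) := by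
    intro x y h
    exact ⟨fun hx => hx.trans h, fun hy => hy.trans (reach_symm hScc h)⟩
  have hPρ : ∀ x, x ∈ P ↔ ρ x ∈ P := fun x => hPmem (reach_rho x)
  have hPθ : ∀ x, x ∈ Sᶜ → (x ∈ P ↔ M.θ x ∈ P) := fun x hx => hPmem (reach_theta hx)
  have hσρ : ∀ x, M.σ x = ρ (M.θ x) := by
    intro x
    simp only [hρ, Equiv.Perm.mul_apply, M.θ_invol x]
  have hPσθ : ∀ x, (M.σ x ∈ P ↔ M.θ x ∈ P) := fun x => by
    rw [hσρ x]; exact (hPρ (M.θ x)).symm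
  set W : Set M.D := {x | ¬ (x ∈ P ↔ M.σ x ∈ P)} with hW
  have hWiff : ∀ x, x ∈ W ↔ ¬ (x ∈ P ↔ M.θ x ∈ P) := by
    intro x
    simp only [hW, Set.mem_setOf_eq]
    exact not_congr (iff_congr Iff.rfl (hPσθ x))
  have hWS : W ⊆ S := by
    intro x hx
    by_contra hxS
    exact (hWiff x).mp hx (hPθ x hxS)
  have hWθ : ∀ x ∈ W, M.θ x ∈ W := by
    intro x hx
    rw [hWiff x] at hx
    rw [hWiff (M.θ x), M.θ_invol x]
    exact fun h => hx h.symm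
  have hodd : ∀ x ∈ W, ∃ y, y ∈ W ∧ M.σ.SameCycle x y ∧ y ≠ x := by
    intro x hx
    by_contra hcon
    push_neg at hcon
    refine odd_change (Pred := fun z => z ∈ P) hx ?_
    intro y hsc hne
    by_contra hy
    exact hne (hcon y hy hsc)
  have hWne : ∃ w, w ∈ W := by
    by_contra hno
    push_neg at hno
    have hiff : ∀ x, (x ∈ P ↔ M.σ x ∈ P) := fun x => not_not.mp (hno x)
    have hiffθ : ∀ x, (x ∈ P ↔ M.θ x ∈ P) := fun x => (hiff x).trans (hPσθ x)
    have hconn : ∀ c, Relation.ReflTransGen (fun x y => y = M.σ x ∨ y = M.θ x) a c → c ∈ P := by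
      intro c h
      induction h with
      | refl => exact reach_refl a
      | tail h1 h2 ih =>
          rcases h2 with h2 | h2 <;> subst h2
          · exact (hiff _).mp ih
          · exact (hiffθ _).mp ih
    exact hab (hconn b (M.connected a b))
  exact no_even_subgraph hT.2 W hWS hWθ hodd hWne

end PlaneMap


/-- The complemented dual of a spanning tree of a connected plane graph `G`
is a spanning tree of the dual graph `G*`: the edges of `G*` dual to the edges of `G` not in a
spanning tree `T` form a spanning tree of `G*`. -/
theorem stmt15 (M : PlaneMap) (S : Set M.D) (hθ : ∀ a, a ∈ S → M.θ a ∈ S)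
    (hT : M.IsSpanningTree S) : M.IsDualSpanningTree Sᶜ := by
  classical
  have hS : M.Closed S := hθ
  have hSc : M.Closed Sᶜ := hS.compl
  have hdual : ∀ a b, M.reach (M.σ * M.θ) Sᶜ a b := PlaneMap.dual_connected hS hT
  constructor
  · exact hdual
  · intro ℓ c hcyc
    by_contra hcon
    push_neg at hcon
    set V := Nat.card (Quotient (sameCycleSetoid M.σ)) with hV
    set F := Nat.card (Quotient (sameCycleSetoid (M.σ * M.θ))) with hF
    set E := Nat.card (Quotient (sameCycleSetoid M.θ)) with hE
    have hconn1 : Nat.card (Quotient (M.reachSetoid M.σ S hS)) = 1 :=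
      PlaneMap.card_one_of_connected hT.1
    have hA := PlaneMap.card_lower M.σ S.ncard S hS rfl
    have hB := PlaneMap.card_upper M.σ S.ncard S hS hT.2 rfl
    rw [hconn1] at hA hB
    have hE2 := PlaneMap.two_mul_card_edges M
    have hEuler := M.euler
    have hcompl : S.ncard + Sᶜ.ncard = Nat.card M.D := by
      rw [Set.ncard_add_ncard_compl]
    have hSeven := PlaneMap.ncard_even S.ncard S hS rfl
    have hSceven := PlaneMap.ncard_even Sᶜ.ncard Sᶜ hSc rfl
    obtain ⟨hl0, hch, hvin, hein⟩ := hcyc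
    have hc0 : c 0 ∈ Sᶜ := hcon 0
    set X' := Sᶜ \ {c 0, M.θ (c 0)} with hX'
    have hX'c : M.Closed X' := hSc.diff_pair _
    haveI : NeZero ℓ := ⟨by omega⟩
    -- walking around the cycle, avoiding the edge of `c 0`
    have hstep : ∀ n : ℕ, n ≤ ℓ → 1 ≤ n →
        M.reach (M.σ * M.θ) X' (M.θ (c 0)) (c (n : ZMod ℓ)) := by
      intro n
      induction n with
      | zero => omega
      | succ n ih =>
          intro hn h1
          rcases Nat.eq_zero_or_pos n with h | h
          · subst h
            have := PlaneMap.reach_of_sameCycle (X := X') (hch 0)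
            simpa using this
          · have hr := ih (by omega) (by omega)
            have hne : ((n : ℕ) : ZMod ℓ) ≠ 0 := by
              intro h0
              have hval := ZMod.val_cast_of_lt (show n < ℓ by omega)
              rw [h0, ZMod.val_zero] at hval
              omega
            have hmem : c n ∈ X' := by
              refine ⟨hcon _, ?_⟩
              simp only [Set.mem_insert_iff, Set.mem_singleton_iff]
              push_neg
              constructor
              · intro h; exact hne (hein _ 0 (Or.inl h))
              · intro h; exact hne (hein _ 0 (Or.inr h))
            refine (hr.trans (PlaneMap.reach_theta hmem)).trans
              (PlaneMap.reach_of_sameCycle ?_)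
            have hchn := hch (n : ZMod ℓ)
            rw [show ((n + 1 : ℕ) : ZMod ℓ) = (n : ZMod ℓ) + 1 by push_cast; ring]
            exact hchn
    have hc0r : M.reach (M.σ * M.θ) X' (M.θ (c 0)) (c 0) := by
      have := hstep ℓ le_rfl (by omega)
      rw [show ((ℓ : ℕ) : ZMod ℓ) = 0 from ZMod.natCast_self ℓ] at this
      exact this
    have hkey : ∀ a b, M.reach (M.σ * M.θ) X' a b := by
      intro a b
      rcases PlaneMap.reach_split hSc (c 0) (hdual a b) with h | ⟨h1, h2⟩ | ⟨h1, h2⟩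
      · exact h
      · exact (h1.trans (PlaneMap.reach_symm hX'c hc0r)).trans h2
      · exact (h1.trans hc0r).trans h2
    have hconn2 : Nat.card (Quotient (M.reachSetoid (M.σ * M.θ) X' hX'c)) = 1 :=
      PlaneMap.card_one_of_connected hkey
    have hA2 := PlaneMap.card_lower (M.σ * M.θ) X'.ncard X' hX'c rfl
    rw [hconn2] at hA2
    have hX'card : X'.ncard = Sᶜ.ncard - 2 := PlaneMap.ncard_diff_pair hc0 hSc
    have h2card : 2 ≤ Sᶜ.ncard := PlaneMap.two_le_ncard hSc hc0
    have hND : Nat.card M.D = Fintype.card M.D := Nat.card_eq_fintype_card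
    omega
end
end
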